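/- arXiv:1303.2478 — 2 statements merged into one kernel-verified Lean document; each statement's English description precedes it below -/
import Mathlib

section
/- Let G be a finite connected simple graph that contains no induced subgraph isomorphic to C_6, P_7, Δ_1, or Δ_2, let C be a vertex cover of G such that the subgraph induced by C has exactly three connected components, and suppose G contains an induced cycle of length 7 that intersects all three of these components. Then there exists a connected vertex cover C_c of G with |C_c| ≤ |C| + 1 if |C| > 4, and with |C_c| = 6 if |C| = 4. -/
open SimpleGraph

/-- `C` is a vertex cover of `G`: every edge of `G` has an endpoint in `C`. -/
def IsVertexCover {V : Type} (G : SimpleGraph V) (C : Set V) : Prop :=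
  ∀ ⦃u v : V⦄, G.Adj u v → u ∈ C ∨ v ∈ C

/-- `C` is a connected vertex cover of `G`: a vertex cover inducing a connected subgraph. -/
def IsConnectedVertexCover {V : Type} (G : SimpleGraph V) (C : Set V) : Prop :=
  _root_.IsVertexCover G C ∧ (G.induce C).Connected

/-- The vertex cover number `τ(G)`. -/
noncomputable def tau {V : Type} (G : SimpleGraph V) : ℕ :=
  sInf {n | ∃ C : Set V, _root_.IsVertexCover G C ∧ C.ncard = n}

/-- The connected vertex cover number `τ_c(G)`. -/
noncomputable def tauc {V : Type} (G : SimpleGraph V) : ℕ :=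
  sInf {n | ∃ C : Set V, IsConnectedVertexCover G C ∧ C.ncard = n}

/-- `G` is `H`-free: `G` has no induced subgraph isomorphic to `H`
(equivalently, there is no graph embedding of `H` into `G`). -/
def HFree {W V : Type} (H : SimpleGraph W) (G : SimpleGraph V) : Prop :=
  IsEmpty (H ↪g G)

/-- `Δ₁`: two 4-cycles `0-1-3-2-0` and `3-4-5-6-3` sharing exactly the vertex `3`. -/
def Delta1 : SimpleGraph (Fin 7) :=
  SimpleGraph.fromEdgeSet {s(0,1), s(0,2), s(1,3), s(2,3), s(3,4), s(4,5), s(5,6), s(6,3)}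

/-- `Δ₂`: `Δ₁` with the edge `{1,3}` (an edge incident to the degree-4 vertex `3`) removed. -/
def Delta2 : SimpleGraph (Fin 7) :=
  SimpleGraph.fromEdgeSet {s(0,1), s(0,2), s(2,3), s(3,4), s(4,5), s(5,6), s(6,3)}

namespace SevenCycleAux

instance instDecD2 : DecidableRel Delta2.Adj := fun a b =>
  decidable_of_iff ((a ≠ b) ∧ (s(a,b) ∈ ({s(0,1), s(0,2), s(2,3), s(3,4), s(4,5), s(5,6), s(6,3)}
      : Finset (Sym2 (Fin 7))))) (by
    rw [Delta2]
    constructor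
    · rintro ⟨h1, h2⟩
      refine ⟨?_, h1⟩
      simpa using h2
    · rintro ⟨h2, h1⟩
      refine ⟨h1, ?_⟩
      simpa using h2)

instance instDecPath : ∀ n, DecidableRel (pathGraph n).Adj := fun _ u v =>
  decidable_of_iff _ pathGraph_adj.symm

lemma hH_P7 : ∀ i j : Fin 7, i ≠ j → ¬(pathGraph 7).Adj i j →
    ∃ k, ¬((pathGraph 7).Adj i k ↔ (pathGraph 7).Adj j k) := by decide

lemma hH_C6 : ∀ i j : Fin 6, i ≠ j → ¬(cycleGraph 6).Adj i j →
    ∃ k, ¬((cycleGraph 6).Adj i k ↔ (cycleGraph 6).Adj j k) := by decide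

lemma hH_D2 : ∀ i j : Fin 7, i ≠ j → ¬Delta2.Adj i j →
    (∃ k, ¬(Delta2.Adj i k ↔ Delta2.Adj j k)) ∨ ((i = 4 ∧ j = 6) ∨ (i = 6 ∧ j = 4)) := by decide

variable {V : Type} {G : SimpleGraph V}

lemma free_contra7 (H : SimpleGraph (Fin 7)) [DecidableRel H.Adj]
    (hH : ∀ i j : Fin 7, i ≠ j → ¬H.Adj i j → ∃ k, ¬(H.Adj i k ↔ H.Adj j k))
    (hfree : HFree H G) (a0 a1 a2 a3 a4 a5 a6 : V)
    (h01 : H.Adj 0 1 ↔ G.Adj a0 a1) (h02 : H.Adj 0 2 ↔ G.Adj a0 a2)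
    (h03 : H.Adj 0 3 ↔ G.Adj a0 a3) (h04 : H.Adj 0 4 ↔ G.Adj a0 a4)
    (h05 : H.Adj 0 5 ↔ G.Adj a0 a5) (h06 : H.Adj 0 6 ↔ G.Adj a0 a6)
    (h12 : H.Adj 1 2 ↔ G.Adj a1 a2) (h13 : H.Adj 1 3 ↔ G.Adj a1 a3)
    (h14 : H.Adj 1 4 ↔ G.Adj a1 a4) (h15 : H.Adj 1 5 ↔ G.Adj a1 a5)
    (h16 : H.Adj 1 6 ↔ G.Adj a1 a6) (h23 : H.Adj 2 3 ↔ G.Adj a2 a3)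
    (h24 : H.Adj 2 4 ↔ G.Adj a2 a4) (h25 : H.Adj 2 5 ↔ G.Adj a2 a5)
    (h26 : H.Adj 2 6 ↔ G.Adj a2 a6) (h34 : H.Adj 3 4 ↔ G.Adj a3 a4)
    (h35 : H.Adj 3 5 ↔ G.Adj a3 a5) (h36 : H.Adj 3 6 ↔ G.Adj a3 a6)
    (h45 : H.Adj 4 5 ↔ G.Adj a4 a5) (h46 : H.Adj 4 6 ↔ G.Adj a4 a6)
    (h56 : H.Adj 5 6 ↔ G.Adj a5 a6) : False := by
  set w : Fin 7 → V := ![a0, a1, a2, a3, a4, a5, a6] with hw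
  have hiff : ∀ i j : Fin 7, H.Adj i j ↔ G.Adj (w i) (w j) := by
    have sym : ∀ i j : Fin 7, (H.Adj i j ↔ G.Adj (w i) (w j)) →
        (H.Adj j i ↔ G.Adj (w j) (w i)) := fun i j h => by
      rw [H.adj_comm, G.adj_comm]; exact h
    intro i j
    fin_cases i <;> fin_cases j <;>
      first
        | (exact iff_of_false (H.irrefl) (G.irrefl))
        | assumption
        | (apply sym; assumption)
  have hinj : Function.Injective w := by
    intro i j hij
    by_contra hne
    have hnadj : ¬ H.Adj i j := fun h => by
      have := (hiff i j).mp h; rw [hij] at this; exact G.irrefl this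
    obtain ⟨k, hk⟩ := hH i j hne hnadj
    have heq : G.Adj (w i) (w k) ↔ G.Adj (w j) (w k) := by rw [hij]
    exact hk ((hiff i k).trans (heq.trans (hiff j k).symm))
  exact hfree.elim ⟨⟨w, hinj⟩, fun {a b} => ((hiff a b).symm)⟩

lemma free_contra7d (H : SimpleGraph (Fin 7)) [DecidableRel H.Adj]
    (hH : ∀ i j : Fin 7, i ≠ j → ¬H.Adj i j →
      (∃ k, ¬(H.Adj i k ↔ H.Adj j k)) ∨ ((i = 4 ∧ j = 6) ∨ (i = 6 ∧ j = 4)))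
    (hfree : HFree H G) (a0 a1 a2 a3 a4 a5 a6 : V) (hne46 : a4 ≠ a6)
    (h01 : H.Adj 0 1 ↔ G.Adj a0 a1) (h02 : H.Adj 0 2 ↔ G.Adj a0 a2)
    (h03 : H.Adj 0 3 ↔ G.Adj a0 a3) (h04 : H.Adj 0 4 ↔ G.Adj a0 a4)
    (h05 : H.Adj 0 5 ↔ G.Adj a0 a5) (h06 : H.Adj 0 6 ↔ G.Adj a0 a6)
    (h12 : H.Adj 1 2 ↔ G.Adj a1 a2) (h13 : H.Adj 1 3 ↔ G.Adj a1 a3)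
    (h14 : H.Adj 1 4 ↔ G.Adj a1 a4) (h15 : H.Adj 1 5 ↔ G.Adj a1 a5)
    (h16 : H.Adj 1 6 ↔ G.Adj a1 a6) (h23 : H.Adj 2 3 ↔ G.Adj a2 a3)
    (h24 : H.Adj 2 4 ↔ G.Adj a2 a4) (h25 : H.Adj 2 5 ↔ G.Adj a2 a5)
    (h26 : H.Adj 2 6 ↔ G.Adj a2 a6) (h34 : H.Adj 3 4 ↔ G.Adj a3 a4)
    (h35 : H.Adj 3 5 ↔ G.Adj a3 a5) (h36 : H.Adj 3 6 ↔ G.Adj a3 a6)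
    (h45 : H.Adj 4 5 ↔ G.Adj a4 a5) (h46 : H.Adj 4 6 ↔ G.Adj a4 a6)
    (h56 : H.Adj 5 6 ↔ G.Adj a5 a6) : False := by
  set w : Fin 7 → V := ![a0, a1, a2, a3, a4, a5, a6] with hw
  have hiff : ∀ i j : Fin 7, H.Adj i j ↔ G.Adj (w i) (w j) := by
    have sym : ∀ i j : Fin 7, (H.Adj i j ↔ G.Adj (w i) (w j)) →
        (H.Adj j i ↔ G.Adj (w j) (w i)) := fun i j h => by
      rw [H.adj_comm, G.adj_comm]; exact h
    intro i j
    fin_cases i <;> fin_cases j <;>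
      first
        | (exact iff_of_false (H.irrefl) (G.irrefl))
        | assumption
        | (apply sym; assumption)
  have hinj : Function.Injective w := by
    intro i j hij
    by_contra hne
    have hnadj : ¬ H.Adj i j := fun h => by
      have := (hiff i j).mp h; rw [hij] at this; exact G.irrefl this
    rcases hH i j hne hnadj with ⟨k, hk⟩ | ⟨hi, hj⟩ | ⟨hi, hj⟩
    · have heq : G.Adj (w i) (w k) ↔ G.Adj (w j) (w k) := by rw [hij]
      exact hk ((hiff i k).trans (heq.trans (hiff j k).symm))
    · subst hi; subst hj; exact hne46 hij
    · subst hi; subst hj; exact hne46 hij.symm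
  exact hfree.elim ⟨⟨w, hinj⟩, fun {a b} => ((hiff a b).symm)⟩

lemma free_contra6 (H : SimpleGraph (Fin 6)) [DecidableRel H.Adj]
    (hH : ∀ i j : Fin 6, i ≠ j → ¬H.Adj i j → ∃ k, ¬(H.Adj i k ↔ H.Adj j k))
    (hfree : HFree H G) (a0 a1 a2 a3 a4 a5 : V)
    (h01 : H.Adj 0 1 ↔ G.Adj a0 a1) (h02 : H.Adj 0 2 ↔ G.Adj a0 a2)
    (h03 : H.Adj 0 3 ↔ G.Adj a0 a3) (h04 : H.Adj 0 4 ↔ G.Adj a0 a4)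
    (h05 : H.Adj 0 5 ↔ G.Adj a0 a5)
    (h12 : H.Adj 1 2 ↔ G.Adj a1 a2) (h13 : H.Adj 1 3 ↔ G.Adj a1 a3)
    (h14 : H.Adj 1 4 ↔ G.Adj a1 a4) (h15 : H.Adj 1 5 ↔ G.Adj a1 a5)
    (h23 : H.Adj 2 3 ↔ G.Adj a2 a3) (h24 : H.Adj 2 4 ↔ G.Adj a2 a4)
    (h25 : H.Adj 2 5 ↔ G.Adj a2 a5) (h34 : H.Adj 3 4 ↔ G.Adj a3 a4)
    (h35 : H.Adj 3 5 ↔ G.Adj a3 a5) (h45 : H.Adj 4 5 ↔ G.Adj a4 a5) : False := by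
  set w : Fin 6 → V := ![a0, a1, a2, a3, a4, a5] with hw
  have hiff : ∀ i j : Fin 6, H.Adj i j ↔ G.Adj (w i) (w j) := by
    have sym : ∀ i j : Fin 6, (H.Adj i j ↔ G.Adj (w i) (w j)) →
        (H.Adj j i ↔ G.Adj (w j) (w i)) := fun i j h => by
      rw [H.adj_comm, G.adj_comm]; exact h
    intro i j
    fin_cases i <;> fin_cases j <;>
      first
        | (exact iff_of_false (H.irrefl) (G.irrefl))
        | assumption
        | (apply sym; assumption)
  have hinj : Function.Injective w := by
    intro i j hij
    by_contra hne
    have hnadj : ¬ H.Adj i j := fun h => by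
      have := (hiff i j).mp h; rw [hij] at this; exact G.irrefl this
    obtain ⟨k, hk⟩ := hH i j hne hnadj
    have heq : G.Adj (w i) (w k) ↔ G.Adj (w j) (w k) := by rw [hij]
    exact hk ((hiff i k).trans (heq.trans (hiff j k).symm))
  exact hfree.elim ⟨⟨w, hinj⟩, fun {a b} => ((hiff a b).symm)⟩

def chainB : ℕ → Finset (Fin 7) → Fin 7 → Fin 7 → Bool
  | 0, _, i, j => i = j
  | n+1, T, i, j => i = j || (if i - 1 ∉ T then chainB n T (i-1) j else false)

set_option maxHeartbeats 4000000 in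
set_option maxRecDepth 10000 in
lemma classify : ∀ T : Finset (Fin 7), (∀ i ∈ T, ∀ j ∈ T, ¬(cycleGraph 7).Adj i j) →
    (∃ r : Fin 7, T = {2+r, 4+r, 6+r}) ∨
    (∃ p q : Fin 7, p ∉ T ∧ q ∉ T ∧ ∀ i, i ∉ T → chainB 7 T i p ∨ chainB 7 T i q) := by decide

lemma rot : ∀ r i j : Fin 7, (cycleGraph 7).Adj (i+r) (j+r) ↔ (cycleGraph 7).Adj i j := by decide
lemma mempat : ∀ r i : Fin 7,
    (i+r ∈ ({2+r,4+r,6+r} : Finset (Fin 7)) ↔ (i = 2 ∨ i = 4 ∨ i = 6)) := by decide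
lemma memcompat : ∀ r i : Fin 7,
    (i ∉ ({2+r,4+r,6+r} : Finset (Fin 7)) ↔ (i = 0+r ∨ i = 1+r ∨ i = 3+r ∨ i = 5+r)) := by decide
lemma stepadj : ∀ i : Fin 7, (cycleGraph 7).Adj i (i-1) := by decide

/-- Transfer a walk in an induced subgraph to reachability in another induced subgraph. -/
lemma walk_transfer {S T : Set V} : ∀ {x y : ↥S} (p : (G.induce S).Walk x y)
    (_ : ∀ c ∈ p.support, (c : V) ∈ T) (hx : (x : V) ∈ T) (hy : (y : V) ∈ T),
    (G.induce T).Reachable ⟨x, hx⟩ ⟨y, hy⟩ := by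
  intro x y p
  induction p with
  | nil => intro _ hx hy; exact Reachable.refl _
  | @cons a b c h q ih =>
    intro hsup hx hy
    have hb : (b : V) ∈ T := hsup b (by simp [Walk.support_cons])
    have hadj : (G.induce T).Adj ⟨a, hx⟩ ⟨b, hb⟩ := by
      simp only [comap_adj, Function.Embedding.coe_subtype]
      exact h
    exact (hadj.reachable).trans (ih (fun c hc => hsup c (by simp [Walk.support_cons, hc])) hb hy)

/-- Reachability transferred along a "component-closed" superset condition. -/
lemma reach_mono {S T : Set V} {x y : ↥S} (hr : (G.induce S).Reachable x y)
    (hT : ∀ c : ↥S, (G.induce S).Reachable c y → (c : V) ∈ T)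
    (hx : (x : V) ∈ T) (hy : (y : V) ∈ T) : (G.induce T).Reachable ⟨x, hx⟩ ⟨y, hy⟩ := by
  classical
  obtain ⟨p⟩ := hr
  exact walk_transfer p (fun c hc => hT c ⟨p.dropUntil c hc⟩) hx hy

lemma pen_aux {S : Set V} {x y : ↥S} (q : (G.induce S).Walk x y) (hq : q.IsPath)
    (hne : x ≠ y) : ∃ z : ↥S, (G.induce S).Adj x z ∧
      ∃ (r : (G.induce S).Walk z y), x ∉ r.support := by
  cases q with
  | nil => exact absurd rfl hne
  | cons h r =>
    exact ⟨_, h, r, (Walk.cons_isPath_iff h r |>.mp hq).2⟩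

/-- From reachability to `t` inside `S`, extract a last-step neighbor `w` of `t` together with
reachability from `a` to `w` avoiding `t`. -/
lemma pen {S : Set V} {a t : V} (ha : a ∈ S) (ht : t ∈ S) (hne : a ≠ t)
    (hr : (G.induce S).Reachable ⟨a, ha⟩ ⟨t, ht⟩) :
    ∃ w, ∃ (_ : w ∈ S), w ≠ t ∧ G.Adj w t ∧
      ∀ (T : Set V), (∀ c ∈ S, c ≠ t → c ∈ T) → ∀ (haT : a ∈ T) (hwT : w ∈ T),
        (G.induce T).Reachable ⟨a, haT⟩ ⟨w, hwT⟩ := by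
  classical
  obtain ⟨p0⟩ := hr
  have hp := p0.toPath.2
  obtain ⟨z, hadj, r, hxnot⟩ := pen_aux (p0.toPath.1.reverse) (hp.reverse)
    (fun h => hne (congrArg Subtype.val h).symm)
  have hzS : (z : V) ∈ S := z.2
  have hznt : (z : V) ≠ t := by
    intro h
    exact hadj.ne' (Subtype.ext h)
  have hGadj : G.Adj (z : V) t := by
    have : G.Adj t (z : V) := hadj
    exact this.symm
  refine ⟨z, hzS, hznt, hGadj, ?_⟩
  intro T hsub haT hwT
  have hsup : ∀ c ∈ r.reverse.support, (c : V) ∈ T := by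
    intro c hc
    rw [Walk.support_reverse, List.mem_reverse] at hc
    refine hsub c c.2 ?_
    intro hct
    have : c = (⟨t, ht⟩ : ↥S) := Subtype.ext hct
    rw [this] at hc
    exact hxnot hc
  exact walk_transfer r.reverse hsup haT hwT

lemma pigeon3 {α : Type*} {a b c x y : α} (hab : a ≠ b) (hac : a ≠ c) (hbc : b ≠ c)
    (ha : a = x ∨ a = y) (hb : b = x ∨ b = y) (hc : c = x ∨ c = y) : False := by
  rcases ha with rfl | rfl <;> rcases hb with rfl | rfl <;> rcases hc with rfl | rfl <;>
    simp_all

end SevenCycleAux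

/-- If `G` is a connected `(C₆, P₇, Δ₁, Δ₂)`-free graph, `C` is a vertex cover whose
induced subgraph has exactly three connected components, and `G` has an induced
7-cycle meeting all three components, then there is a connected vertex cover `C_c`
with `|C_c| ≤ |C| + 1` if `|C| > 4`, and `|C_c| = 6` if `|C| = 4`. -/
theorem seven_cycle_lemma {V : Type} [Fintype V] (G : SimpleGraph V)
    (hconn : G.Connected)
    (hC6 : HFree (SimpleGraph.cycleGraph 6) G) (hP7 : HFree (SimpleGraph.pathGraph 7) G)
    (hD1 : HFree Delta1 G) (hD2 : HFree Delta2 G)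
    (C : Set V) (hC : _root_.IsVertexCover G C)
    (h3 : Nat.card (G.induce C).ConnectedComponent = 3)
    (f : SimpleGraph.cycleGraph 7 ↪g G)
    (hmeet : ∀ K : (G.induce C).ConnectedComponent,
      ∃ i : Fin 7, f i ∈ Subtype.val '' K.supp) :
    ∃ Cc : Set V, IsConnectedVertexCover G Cc ∧
      (4 < C.ncard → Cc.ncard ≤ C.ncard + 1) ∧
      (C.ncard = 4 → Cc.ncard = 6) := by
  classical
  open SevenCycleAux in
  -- the set of uncovered cycle indices
  set T : Finset (Fin 7) := Finset.univ.filter (fun i => f i ∉ C) with hTdef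
  have hmemT : ∀ i : Fin 7, i ∈ T ↔ f i ∉ C := by intro i; simp [hTdef]
  have memf : ∀ {i : Fin 7}, i ∉ T → f i ∈ C := fun {i} hi => by
    by_contra hh; exact hi ((hmemT i).mpr hh)
  have hTind : ∀ i ∈ T, ∀ j ∈ T, ¬(SimpleGraph.cycleGraph 7).Adj i j := by
    intro i hi j hj hadj
    rcases hC (f.map_rel_iff.mpr hadj) with h | h
    · exact (hmemT i).mp hi h
    · exact (hmemT j).mp hj h
  -- reachability within the cover
  set Rc : V → V → Prop :=
    fun a b => ∃ (ha : a ∈ C) (hb : b ∈ C), (G.induce C).Reachable ⟨a, ha⟩ ⟨b, hb⟩ with hRc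
  have Rc_refl : ∀ {a : V}, a ∈ C → Rc a a := fun ha => ⟨ha, ha, Reachable.refl _⟩
  have Rc_symm : ∀ {a b}, Rc a b → Rc b a := by
    rintro a b ⟨ha, hb, h⟩; exact ⟨hb, ha, h.symm⟩
  have Rc_trans : ∀ {a b c}, Rc a b → Rc b c → Rc a c := by
    rintro a b c ⟨ha, hb, h⟩ ⟨hb', hc, h'⟩; exact ⟨ha, hc, h.trans h'⟩
  have Rc_adj : ∀ {a b}, a ∈ C → b ∈ C → G.Adj a b → Rc a b := by
    intro a b ha hb h
    refine ⟨ha, hb, Adj.reachable ?_⟩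
    simp only [SimpleGraph.comap_adj, Function.Embedding.coe_subtype]
    exact h
  have hfin : Finite (G.induce C).ConnectedComponent :=
    Nat.finite_of_card_ne_zero (by omega)
  have mkRc : ∀ {a b : V} (ha : a ∈ C) (hb : b ∈ C), Rc a b →
      (G.induce C).connectedComponentMk ⟨a, ha⟩ = (G.induce C).connectedComponentMk ⟨b, hb⟩ := by
    rintro a b ha hb ⟨ha', hb', h⟩
    exact SimpleGraph.ConnectedComponent.sound h
  have hchain : ∀ (n : ℕ) (i j : Fin 7), i ∉ T → j ∉ T → chainB n T i j = true →
      Rc (f i) (f j) := by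
    intro n
    induction n with
    | zero =>
      intro i j _ hj h
      simp only [chainB, decide_eq_true_eq] at h
      subst h; exact Rc_refl (memf hj)
    | succ n ih =>
      intro i j hi hj h
      by_cases hij : i = j
      · subst hij; exact Rc_refl (memf hi)
      · rw [chainB] at h
        simp only [hij, decide_false, Bool.false_or] at h
        by_cases hstep : i - 1 ∉ T
        · rw [if_pos hstep] at h
          exact Rc_trans (Rc_adj (memf hi) (memf hstep) (f.map_rel_iff.mpr (stepadj i)))
            (ih (i-1) j hstep hj h)
        · rw [if_neg hstep] at h; cases h
  -- representatives of components on the cycle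
  have rep : ∀ K : (G.induce C).ConnectedComponent, ∃ (i : Fin 7) (hfi : f i ∈ C),
      (G.induce C).connectedComponentMk ⟨f i, hfi⟩ = K := by
    intro K
    obtain ⟨i, hi⟩ := hmeet K
    obtain ⟨b, hbsupp, hbeq⟩ := hi
    refine ⟨i, hbeq ▸ b.2, ?_⟩
    have hbe : b = ⟨f i, hbeq ▸ b.2⟩ := Subtype.ext hbeq
    rw [← hbe]
    exact (SimpleGraph.ConnectedComponent.mem_supp_iff _ _).mp hbsupp
  rcases classify T hTind with ⟨r, hTr⟩ | ⟨p, q, hp, hq, hpq⟩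
  swap
  · -- at most two "arcs" : contradiction with three components
    exfalso
    letI := Fintype.ofFinite (G.induce C).ConnectedComponent
    have hu3 : (Finset.univ : Finset (G.induce C).ConnectedComponent).card = 3 := by
      rw [Finset.card_univ, ← Nat.card_eq_fintype_card, h3]
    obtain ⟨K1, K2, K3, h12, h13, h23, -⟩ := Finset.card_eq_three.mp hu3
    obtain ⟨i1, hf1, hK1⟩ := rep K1
    obtain ⟨i2, hf2, hK2⟩ := rep K2
    obtain ⟨i3, hf3, hK3⟩ := rep K3
    have hT1 : i1 ∉ T := fun h => (hmemT i1).mp h hf1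
    have hT2 : i2 ∉ T := fun h => (hmemT i2).mp h hf2
    have hT3 : i3 ∉ T := fun h => (hmemT i3).mp h hf3
    have key : ∀ (i : Fin 7) (hfi : f i ∈ C), i ∉ T →
        (G.induce C).connectedComponentMk ⟨f i, hfi⟩ =
          (G.induce C).connectedComponentMk ⟨f p, memf hp⟩ ∨
        (G.induce C).connectedComponentMk ⟨f i, hfi⟩ =
          (G.induce C).connectedComponentMk ⟨f q, memf hq⟩ := by
      intro i hfi hiT
      rcases hpq i hiT with h | h
      · exact Or.inl (mkRc hfi (memf hp) (hchain 7 i p hiT hp h))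
      · exact Or.inr (mkRc hfi (memf hq) (hchain 7 i q hiT hq h))
    exact pigeon3 h12 h13 h23
      (hK1 ▸ key i1 hf1 hT1) (hK2 ▸ key i2 hf2 hT2) (hK3 ▸ key i3 hf3 hT3)
  -- now T = {2+r, 4+r, 6+r} : normalize the cycle
  set v : Fin 7 → V := fun i => f (i + r) with hv
  have vinj : ∀ {i j : Fin 7}, v i = v j → i = j := by
    intro i j h
    have := f.injective h
    exact add_right_cancel this
  have hvadj : ∀ i j : Fin 7, G.Adj (v i) (v j) ↔ (SimpleGraph.cycleGraph 7).Adj i j :=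
    fun i j => f.map_rel_iff.trans (rot r i j)
  have gadj : ∀ i j : Fin 7, (SimpleGraph.cycleGraph 7).Adj i j → G.Adj (v i) (v j) :=
    fun i j h => (hvadj i j).mpr h
  have gnadj : ∀ i j : Fin 7, ¬(SimpleGraph.cycleGraph 7).Adj i j → ¬G.Adj (v i) (v j) :=
    fun i j h hh => h ((hvadj i j).mp hh)
  have xv : ∀ i : Fin 7, (i = 2 ∨ i = 4 ∨ i = 6) → v i ∉ C := fun i hi => by
    have : i + r ∈ T := by rw [hTr]; exact (mempat r i).mpr hi
    exact (hmemT _).mp this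
  have mv : ∀ i : Fin 7, (i = 0 ∨ i = 1 ∨ i = 3 ∨ i = 5) → v i ∈ C := fun i hi => by
    refine memf (fun hmem => ?_)
    rw [hTr] at hmem
    have := (mempat r i).mp hmem
    rcases hi with rfl | rfl | rfl | rfl <;> revert this <;> decide
  have mv0 : v 0 ∈ C := mv 0 (by tauto)
  have mv1 : v 1 ∈ C := mv 1 (by tauto)
  have mv3 : v 3 ∈ C := mv 3 (by tauto)
  have mv5 : v 5 ∈ C := mv 5 (by tauto)
  have xv2 : v 2 ∉ C := xv 2 (by tauto)
  have xv4 : v 4 ∉ C := xv 4 (by tauto)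
  have xv6 : v 6 ∉ C := xv 6 (by tauto)
  have hind : ∀ {x y : V}, x ∉ C → y ∉ C → ¬G.Adj x y :=
    fun hx hy h => (hC h).elim (fun hh => hx hh) (fun hh => hy hh)
  -- the three components
  set D1 : Set V := {a | Rc a (v 0)} with hD1def
  set D2 : Set V := {a | Rc a (v 3)} with hD2def
  set D3 : Set V := {a | Rc a (v 5)} with hD3def
  have d1sub : ∀ {a}, a ∈ D1 → a ∈ C := by rintro a ⟨ha, _, _⟩; exact ha
  have d2sub : ∀ {a}, a ∈ D2 → a ∈ C := by rintro a ⟨ha, _, _⟩; exact ha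
  have d3sub : ∀ {a}, a ∈ D3 → a ∈ C := by rintro a ⟨ha, _, _⟩; exact ha
  have d1v0 : v 0 ∈ D1 := Rc_refl mv0
  have d1v1 : v 1 ∈ D1 := Rc_adj mv1 mv0 (gadj 1 0 (by decide))
  have d2v3 : v 3 ∈ D2 := Rc_refl mv3
  have d3v5 : v 5 ∈ D3 := Rc_refl mv5
  have hall3 : ∀ K : (G.induce C).ConnectedComponent,
      K = (G.induce C).connectedComponentMk ⟨v 0, mv0⟩ ∨
      K = (G.induce C).connectedComponentMk ⟨v 3, mv3⟩ ∨
      K = (G.induce C).connectedComponentMk ⟨v 5, mv5⟩ := by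
    intro K
    obtain ⟨i, hfi, hKi⟩ := rep K
    have hiT : i ∉ T := fun h => (hmemT i).mp h hfi
    rw [hTr] at hiT
    rcases (memcompat r i).mp hiT with h | h | h | h <;> subst h
    · exact Or.inl (hKi.symm)
    · refine Or.inl (hKi.symm.trans ?_)
      exact mkRc hfi mv0 (Rc_adj mv1 mv0 (gadj 1 0 (by decide)))
    · exact Or.inr (Or.inl hKi.symm)
    · exact Or.inr (Or.inr hKi.symm)
  have hcard2 : ∀ X Y : (G.induce C).ConnectedComponent,
      (∀ K : (G.induce C).ConnectedComponent, K = X ∨ K = Y) → False := by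
    intro X Y hall
    letI := Fintype.ofFinite (G.induce C).ConnectedComponent
    have h1 : (Finset.univ : Finset (G.induce C).ConnectedComponent).card = 3 := by
      rw [Finset.card_univ, ← Nat.card_eq_fintype_card, h3]
    have h2 : (Finset.univ : Finset (G.induce C).ConnectedComponent) ⊆ {X, Y} := by
      intro K _
      rcases hall K with rfl | rfl <;> simp
    have h4 := Finset.card_le_card h2
    have h5 : ({X, Y} : Finset (G.induce C).ConnectedComponent).card ≤ 2 :=
      le_trans (Finset.card_insert_le _ _) (by simp)
    omega
  have hK03 : (G.induce C).connectedComponentMk ⟨v 0, mv0⟩ ≠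
      (G.induce C).connectedComponentMk ⟨v 3, mv3⟩ := by
    intro e
    refine hcard2 ((G.induce C).connectedComponentMk ⟨v 0, mv0⟩)
      ((G.induce C).connectedComponentMk ⟨v 5, mv5⟩) (fun K => ?_)
    rcases hall3 K with h | h | h
    · exact Or.inl h
    · exact Or.inl (h.trans e.symm)
    · exact Or.inr h
  have hK05 : (G.induce C).connectedComponentMk ⟨v 0, mv0⟩ ≠
      (G.induce C).connectedComponentMk ⟨v 5, mv5⟩ := by
    intro e
    refine hcard2 ((G.induce C).connectedComponentMk ⟨v 0, mv0⟩)
      ((G.induce C).connectedComponentMk ⟨v 3, mv3⟩) (fun K => ?_)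
    rcases hall3 K with h | h | h
    · exact Or.inl h
    · exact Or.inr h
    · exact Or.inl (h.trans e.symm)
  have hK35 : (G.induce C).connectedComponentMk ⟨v 3, mv3⟩ ≠
      (G.induce C).connectedComponentMk ⟨v 5, mv5⟩ := by
    intro e
    refine hcard2 ((G.induce C).connectedComponentMk ⟨v 0, mv0⟩)
      ((G.induce C).connectedComponentMk ⟨v 3, mv3⟩) (fun K => ?_)
    rcases hall3 K with h | h | h
    · exact Or.inl h
    · exact Or.inr h
    · exact Or.inr (h.trans e.symm)
  have htri : ∀ a, a ∈ C → a ∈ D1 ∨ a ∈ D2 ∨ a ∈ D3 := by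
    intro a ha
    rcases hall3 ((G.induce C).connectedComponentMk ⟨a, ha⟩) with h | h | h
    · exact Or.inl ⟨ha, mv0, (SimpleGraph.ConnectedComponent.eq).mp h⟩
    · exact Or.inr (Or.inl ⟨ha, mv3, (SimpleGraph.ConnectedComponent.eq).mp h⟩)
    · exact Or.inr (Or.inr ⟨ha, mv5, (SimpleGraph.ConnectedComponent.eq).mp h⟩)
  have dj12 : ∀ {a}, a ∈ D1 → a ∈ D2 → False := by
    rintro a h1 h2
    exact hK03 (mkRc mv0 mv3 (Rc_trans (Rc_symm h1) h2))
  have dj13 : ∀ {a}, a ∈ D1 → a ∈ D3 → False := by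
    rintro a h1 h2
    exact hK05 (mkRc mv0 mv5 (Rc_trans (Rc_symm h1) h2))
  have dj23 : ∀ {a}, a ∈ D2 → a ∈ D3 → False := by
    rintro a h1 h2
    exact hK35 (mkRc mv3 mv5 (Rc_trans (Rc_symm h1) h2))
  have cr12 : ∀ {a b}, a ∈ D1 → b ∈ D2 → ¬G.Adj a b :=
    fun h1 h2 hadj => dj12 h1 (Rc_trans (Rc_adj (d1sub h1) (d2sub h2) hadj) h2)
  have cr13 : ∀ {a b}, a ∈ D1 → b ∈ D3 → ¬G.Adj a b :=
    fun h1 h2 hadj => dj13 h1 (Rc_trans (Rc_adj (d1sub h1) (d3sub h2) hadj) h2)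
  have cr23 : ∀ {a b}, a ∈ D2 → b ∈ D3 → ¬G.Adj a b :=
    fun h1 h2 hadj => dj23 h1 (Rc_trans (Rc_adj (d2sub h1) (d3sub h2) hadj) h2)
  -- generic transfer into supersets of C
  have toCc : ∀ (Cc : Set V), C ⊆ Cc → ∀ {a b}, Rc a b → ∀ (ha : a ∈ Cc) (hb : b ∈ Cc),
      (G.induce Cc).Reachable ⟨a, ha⟩ ⟨b, hb⟩ := by
    rintro Cc hsub a b ⟨ha, hb, h⟩ haC hbC
    exact reach_mono h (fun c _ => hsub c.2) haC hbC
  -- base construction : C ∪ {v2, v4}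
  have hbase : IsConnectedVertexCover G (insert (v 2) (insert (v 4) C)) := by
    constructor
    · intro a b h
      rcases hC h with ha | hb
      · exact Or.inl (Set.mem_insert_of_mem _ (Set.mem_insert_of_mem _ ha))
      · exact Or.inr (Set.mem_insert_of_mem _ (Set.mem_insert_of_mem _ hb))
    · rw [SimpleGraph.connected_iff]
      have hm2 : v 2 ∈ insert (v 2) (insert (v 4) C) := Set.mem_insert _ _
      have hm4 : v 4 ∈ insert (v 2) (insert (v 4) C) :=
        Set.mem_insert_of_mem _ (Set.mem_insert _ _)
      have hmC : ∀ {z}, z ∈ C → z ∈ insert (v 2) (insert (v 4) C) :=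
        fun hz => Set.mem_insert_of_mem _ (Set.mem_insert_of_mem _ hz)
      have hCs : C ⊆ insert (v 2) (insert (v 4) C) := fun z hz => hmC hz
      have edge : ∀ (i j : Fin 7) (hi : v i ∈ insert (v 2) (insert (v 4) C))
          (hj : v j ∈ insert (v 2) (insert (v 4) C)), (SimpleGraph.cycleGraph 7).Adj i j →
          (G.induce (insert (v 2) (insert (v 4) C))).Adj ⟨v i, hi⟩ ⟨v j, hj⟩ := by
        intro i j hi hj h
        simp only [SimpleGraph.comap_adj, Function.Embedding.coe_subtype]
        exact gadj i j h
      have hub : ∀ z : ↥(insert (v 2) (insert (v 4) C)),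
          (G.induce (insert (v 2) (insert (v 4) C))).Reachable z ⟨v 3, hmC mv3⟩ := by
        rintro ⟨z, hz⟩
        rcases hz with rfl | hz
        · exact (edge 2 3 hm2 (hmC mv3) (by decide)).reachable
        rcases hz with rfl | hz
        · exact ((edge 3 4 (hmC mv3) hm4 (by decide)).symm).reachable
        rcases htri z hz with h | h | h
        · refine (toCc _ hCs h (hmC hz) (hmC mv0)).trans ?_
          exact ((edge 0 1 (hmC mv0) (hmC mv1) (by decide)).reachable).trans
            (((edge 1 2 (hmC mv1) hm2 (by decide)).reachable).trans
              ((edge 2 3 hm2 (hmC mv3) (by decide)).reachable))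
        · exact toCc _ hCs h (hmC hz) (hmC mv3)
        · refine (toCc _ hCs h (hmC hz) (hmC mv5)).trans ?_
          exact (((edge 5 4 (hmC mv5) hm4 (by decide)).reachable).trans
            ((edge 4 3 hm4 (hmC mv3) (by decide)).reachable))
      exact ⟨fun x y => (hub x).trans (hub y).symm, ⟨⟨v 3, hmC mv3⟩⟩⟩
  have hne24 : v 2 ≠ v 4 := fun h => by have := vinj h; revert this; decide
  have hbcard : (insert (v 2) (insert (v 4) C)).ncard = C.ncard + 2 := by
    rw [Set.ncard_insert_of_notMem (by
        simp only [Set.mem_insert_iff]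
        rintro (h | h)
        · exact hne24 h
        · exact xv2 h) (Set.toFinite _),
      Set.ncard_insert_of_notMem xv4 (Set.toFinite _)]
  by_cases h4 : C.ncard = 4
  · exact ⟨_, hbase, fun hlt => absurd h4 (by omega), fun _ => by omega⟩
  by_cases h5 : 5 ≤ C.ncard
  swap
  · exact ⟨_, hbase, fun hlt => absurd hlt (by omega), fun he => absurd he h4⟩
  -- the hard case
  suffices hgood : ∃ Cc : Set V, IsConnectedVertexCover G Cc ∧ Cc.ncard ≤ C.ncard + 1 by
    obtain ⟨Cc, hc1, hc2⟩ := hgood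
    exact ⟨Cc, hc1, fun _ => hc2, fun he => absurd he h4⟩
  have notA_or : (∃ w, (∃ a ∈ D1, G.Adj w a) ∧ (∃ a ∈ D2, G.Adj w a) ∧ (∃ a ∈ D3, G.Adj w a)) ∨
      (∀ (w b1 b2 b3 : V), b1 ∈ D1 → b2 ∈ D2 → b3 ∈ D3 →
        G.Adj w b1 → G.Adj w b2 → G.Adj w b3 → False) := by
    by_cases hA : ∃ w, (∃ a ∈ D1, G.Adj w a) ∧ (∃ a ∈ D2, G.Adj w a) ∧ (∃ a ∈ D3, G.Adj w a)
    · exact Or.inl hA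
    · exact Or.inr (fun w b1 b2 b3 h1 h2 h3 g1 g2 g3 =>
        hA ⟨w, ⟨b1, h1, g1⟩, ⟨b2, h2, g2⟩, ⟨b3, h3, g3⟩⟩)
  have vne : ∀ i j : Fin 7, i ≠ j → v i ≠ v j := fun i j hij h => hij (vinj h)
  rcases notA_or with hA | notA
  · -- Case A : a vertex adjacent to all three components
    obtain ⟨w, ⟨a1, ha1, hw1⟩, ⟨a2, ha2, hw2⟩, ⟨a3, ha3, hw3⟩⟩ := hA
    have hwC : w ∉ C := by
      intro hw
      rcases htri w hw with h | h | h
      · exact dj12 h (Rc_trans (Rc_adj hw (d2sub ha2) hw2) ha2)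
      · exact dj12 (Rc_trans (Rc_adj hw (d1sub ha1) hw1) ha1) h
      · exact dj13 (Rc_trans (Rc_adj hw (d1sub ha1) hw1) ha1) h
    refine ⟨insert w C, ⟨?_, ?_⟩, ?_⟩
    · intro a b h
      rcases hC h with h' | h'
      · exact Or.inl (Set.mem_insert_of_mem _ h')
      · exact Or.inr (Set.mem_insert_of_mem _ h')
    · rw [SimpleGraph.connected_iff]
      have hmw : w ∈ insert w C := Set.mem_insert _ _
      have hmC : ∀ {z}, z ∈ C → z ∈ insert w C := fun hz => Set.mem_insert_of_mem _ hz
      have hCs : C ⊆ insert w C := fun z hz => hmC hz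
      have step : ∀ (z : V) (hz : z ∈ C) (a : V) (ha : a ∈ C), Rc z a → G.Adj w a →
          (G.induce (insert w C)).Reachable ⟨z, hmC hz⟩ ⟨w, hmw⟩ := by
        intro z hz a ha hrc hadj
        refine (toCc _ hCs hrc (hmC hz) (hmC ha)).trans (SimpleGraph.Adj.reachable ?_)
        simp only [SimpleGraph.comap_adj, Function.Embedding.coe_subtype]
        exact hadj.symm
      have hub : ∀ z : ↥(insert w C), (G.induce (insert w C)).Reachable z ⟨w, hmw⟩ := by
        rintro ⟨z, hz⟩
        rcases hz with rfl | hz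
        · exact Reachable.refl _
        rcases htri z hz with h | h | h
        · exact step z hz a1 (d1sub ha1) (Rc_trans h (Rc_symm ha1)) hw1
        · exact step z hz a2 (d2sub ha2) (Rc_trans h (Rc_symm ha2)) hw2
        · exact step z hz a3 (d3sub ha3) (Rc_trans h (Rc_symm ha3)) hw3
      exact ⟨fun x y => (hub x).trans (hub y).symm, ⟨⟨w, hmw⟩⟩⟩
    · rw [Set.ncard_insert_of_notMem hwC (Set.toFinite _)]
  have n2D3 : ∀ {b}, b ∈ D3 → ¬G.Adj (v 2) b := fun {b} hb h =>
    notA (v 2) (v 1) (v 3) b d1v1 d2v3 hb (gadj 2 1 (by decide)) (gadj 2 3 (by decide)) h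
  have n4D1 : ∀ {b}, b ∈ D1 → ¬G.Adj (v 4) b := fun {b} hb h =>
    notA (v 4) b (v 3) (v 5) hb d2v3 d3v5 h (gadj 4 3 (by decide)) (gadj 4 5 (by decide))
  have n6D2 : ∀ {b}, b ∈ D2 → ¬G.Adj (v 6) b := fun {b} hb h =>
    notA (v 6) (v 0) b (v 5) d1v0 hb d3v5 (gadj 6 0 (by decide)) h (gadj 6 5 (by decide))
  have F3 : ∀ u, u ∈ D3 → G.Adj u (v 5) → G.Adj u (v 4) ∧ G.Adj u (v 6) := by
    intro u hu hu5
    by_cases h4 : G.Adj u (v 4)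
    · by_cases h6 : G.Adj u (v 6)
      · exact ⟨h4, h6⟩
      · exfalso
        exact free_contra7 (SimpleGraph.pathGraph 7) hH_P7 hP7 u (v 4) (v 3) (v 2) (v 1) (v 0) (v 6)
          (iff_of_true (by decide) (h4))
          (iff_of_false (by decide) (fun h => cr23 d2v3 hu h.symm))
          (iff_of_false (by decide) (fun h => n2D3 hu h.symm))
          (iff_of_false (by decide) (fun h => cr13 d1v1 hu h.symm))
          (iff_of_false (by decide) (fun h => cr13 d1v0 hu h.symm))
          (iff_of_false (by decide) (h6))
          (iff_of_true (by decide) (gadj 4 3 (by decide)))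
          (iff_of_false (by decide) (gnadj 4 2 (by decide)))
          (iff_of_false (by decide) (gnadj 4 1 (by decide)))
          (iff_of_false (by decide) (gnadj 4 0 (by decide)))
          (iff_of_false (by decide) (gnadj 4 6 (by decide)))
          (iff_of_true (by decide) (gadj 3 2 (by decide)))
          (iff_of_false (by decide) (gnadj 3 1 (by decide)))
          (iff_of_false (by decide) (gnadj 3 0 (by decide)))
          (iff_of_false (by decide) (gnadj 3 6 (by decide)))
          (iff_of_true (by decide) (gadj 2 1 (by decide)))
          (iff_of_false (by decide) (gnadj 2 0 (by decide)))
          (iff_of_false (by decide) (gnadj 2 6 (by decide)))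
          (iff_of_true (by decide) (gadj 1 0 (by decide)))
          (iff_of_false (by decide) (gnadj 1 6 (by decide)))
          (iff_of_true (by decide) (gadj 0 6 (by decide)))
    · by_cases h6 : G.Adj u (v 6)
      · exfalso
        exact free_contra7 (SimpleGraph.pathGraph 7) hH_P7 hP7 u (v 6) (v 0) (v 1) (v 2) (v 3) (v 4)
          (iff_of_true (by decide) (h6))
          (iff_of_false (by decide) (fun h => cr13 d1v0 hu h.symm))
          (iff_of_false (by decide) (fun h => cr13 d1v1 hu h.symm))
          (iff_of_false (by decide) (fun h => n2D3 hu h.symm))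
          (iff_of_false (by decide) (fun h => cr23 d2v3 hu h.symm))
          (iff_of_false (by decide) (h4))
          (iff_of_true (by decide) (gadj 6 0 (by decide)))
          (iff_of_false (by decide) (gnadj 6 1 (by decide)))
          (iff_of_false (by decide) (gnadj 6 2 (by decide)))
          (iff_of_false (by decide) (gnadj 6 3 (by decide)))
          (iff_of_false (by decide) (gnadj 6 4 (by decide)))
          (iff_of_true (by decide) (gadj 0 1 (by decide)))
          (iff_of_false (by decide) (gnadj 0 2 (by decide)))
          (iff_of_false (by decide) (gnadj 0 3 (by decide)))
          (iff_of_false (by decide) (gnadj 0 4 (by decide)))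
          (iff_of_true (by decide) (gadj 1 2 (by decide)))
          (iff_of_false (by decide) (gnadj 1 3 (by decide)))
          (iff_of_false (by decide) (gnadj 1 4 (by decide)))
          (iff_of_true (by decide) (gadj 2 3 (by decide)))
          (iff_of_false (by decide) (gnadj 2 4 (by decide)))
          (iff_of_true (by decide) (gadj 3 4 (by decide)))
      · exfalso
        exact free_contra7 (SimpleGraph.pathGraph 7) hH_P7 hP7 u (v 5) (v 4) (v 3) (v 2) (v 1) (v 0)
          (iff_of_true (by decide) (hu5))
          (iff_of_false (by decide) (h4))
          (iff_of_false (by decide) (fun h => cr23 d2v3 hu h.symm))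
          (iff_of_false (by decide) (fun h => n2D3 hu h.symm))
          (iff_of_false (by decide) (fun h => cr13 d1v1 hu h.symm))
          (iff_of_false (by decide) (fun h => cr13 d1v0 hu h.symm))
          (iff_of_true (by decide) (gadj 5 4 (by decide)))
          (iff_of_false (by decide) (gnadj 5 3 (by decide)))
          (iff_of_false (by decide) (gnadj 5 2 (by decide)))
          (iff_of_false (by decide) (gnadj 5 1 (by decide)))
          (iff_of_false (by decide) (gnadj 5 0 (by decide)))
          (iff_of_true (by decide) (gadj 4 3 (by decide)))
          (iff_of_false (by decide) (gnadj 4 2 (by decide)))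
          (iff_of_false (by decide) (gnadj 4 1 (by decide)))
          (iff_of_false (by decide) (gnadj 4 0 (by decide)))
          (iff_of_true (by decide) (gadj 3 2 (by decide)))
          (iff_of_false (by decide) (gnadj 3 1 (by decide)))
          (iff_of_false (by decide) (gnadj 3 0 (by decide)))
          (iff_of_true (by decide) (gadj 2 1 (by decide)))
          (iff_of_false (by decide) (gnadj 2 0 (by decide)))
          (iff_of_true (by decide) (gadj 1 0 (by decide)))
  have F2 : ∀ u, u ∈ D2 → G.Adj u (v 3) → G.Adj u (v 2) ∧ G.Adj u (v 4) := by
    intro u hu hu3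
    by_cases h2 : G.Adj u (v 2)
    · by_cases h4 : G.Adj u (v 4)
      · exact ⟨h2, h4⟩
      · exfalso
        exact free_contra7 (SimpleGraph.pathGraph 7) hH_P7 hP7 u (v 2) (v 1) (v 0) (v 6) (v 5) (v 4)
          (iff_of_true (by decide) (h2))
          (iff_of_false (by decide) (fun h => cr12 d1v1 hu h.symm))
          (iff_of_false (by decide) (fun h => cr12 d1v0 hu h.symm))
          (iff_of_false (by decide) (fun h => n6D2 hu h.symm))
          (iff_of_false (by decide) (cr23 hu d3v5))
          (iff_of_false (by decide) (h4))
          (iff_of_true (by decide) (gadj 2 1 (by decide)))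
          (iff_of_false (by decide) (gnadj 2 0 (by decide)))
          (iff_of_false (by decide) (gnadj 2 6 (by decide)))
          (iff_of_false (by decide) (gnadj 2 5 (by decide)))
          (iff_of_false (by decide) (gnadj 2 4 (by decide)))
          (iff_of_true (by decide) (gadj 1 0 (by decide)))
          (iff_of_false (by decide) (gnadj 1 6 (by decide)))
          (iff_of_false (by decide) (gnadj 1 5 (by decide)))
          (iff_of_false (by decide) (gnadj 1 4 (by decide)))
          (iff_of_true (by decide) (gadj 0 6 (by decide)))
          (iff_of_false (by decide) (gnadj 0 5 (by decide)))
          (iff_of_false (by decide) (gnadj 0 4 (by decide)))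
          (iff_of_true (by decide) (gadj 6 5 (by decide)))
          (iff_of_false (by decide) (gnadj 6 4 (by decide)))
          (iff_of_true (by decide) (gadj 5 4 (by decide)))
    · by_cases h4 : G.Adj u (v 4)
      · exfalso
        exact free_contra7 (SimpleGraph.pathGraph 7) hH_P7 hP7 u (v 4) (v 5) (v 6) (v 0) (v 1) (v 2)
          (iff_of_true (by decide) (h4))
          (iff_of_false (by decide) (cr23 hu d3v5))
          (iff_of_false (by decide) (fun h => n6D2 hu h.symm))
          (iff_of_false (by decide) (fun h => cr12 d1v0 hu h.symm))
          (iff_of_false (by decide) (fun h => cr12 d1v1 hu h.symm))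
          (iff_of_false (by decide) (h2))
          (iff_of_true (by decide) (gadj 4 5 (by decide)))
          (iff_of_false (by decide) (gnadj 4 6 (by decide)))
          (iff_of_false (by decide) (gnadj 4 0 (by decide)))
          (iff_of_false (by decide) (gnadj 4 1 (by decide)))
          (iff_of_false (by decide) (gnadj 4 2 (by decide)))
          (iff_of_true (by decide) (gadj 5 6 (by decide)))
          (iff_of_false (by decide) (gnadj 5 0 (by decide)))
          (iff_of_false (by decide) (gnadj 5 1 (by decide)))
          (iff_of_false (by decide) (gnadj 5 2 (by decide)))
          (iff_of_true (by decide) (gadj 6 0 (by decide)))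
          (iff_of_false (by decide) (gnadj 6 1 (by decide)))
          (iff_of_false (by decide) (gnadj 6 2 (by decide)))
          (iff_of_true (by decide) (gadj 0 1 (by decide)))
          (iff_of_false (by decide) (gnadj 0 2 (by decide)))
          (iff_of_true (by decide) (gadj 1 2 (by decide)))
      · exfalso
        exact free_contra7 (SimpleGraph.pathGraph 7) hH_P7 hP7 u (v 3) (v 2) (v 1) (v 0) (v 6) (v 5)
          (iff_of_true (by decide) (hu3))
          (iff_of_false (by decide) (h2))
          (iff_of_false (by decide) (fun h => cr12 d1v1 hu h.symm))
          (iff_of_false (by decide) (fun h => cr12 d1v0 hu h.symm))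
          (iff_of_false (by decide) (fun h => n6D2 hu h.symm))
          (iff_of_false (by decide) (cr23 hu d3v5))
          (iff_of_true (by decide) (gadj 3 2 (by decide)))
          (iff_of_false (by decide) (gnadj 3 1 (by decide)))
          (iff_of_false (by decide) (gnadj 3 0 (by decide)))
          (iff_of_false (by decide) (gnadj 3 6 (by decide)))
          (iff_of_false (by decide) (gnadj 3 5 (by decide)))
          (iff_of_true (by decide) (gadj 2 1 (by decide)))
          (iff_of_false (by decide) (gnadj 2 0 (by decide)))
          (iff_of_false (by decide) (gnadj 2 6 (by decide)))
          (iff_of_false (by decide) (gnadj 2 5 (by decide)))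
          (iff_of_true (by decide) (gadj 1 0 (by decide)))
          (iff_of_false (by decide) (gnadj 1 6 (by decide)))
          (iff_of_false (by decide) (gnadj 1 5 (by decide)))
          (iff_of_true (by decide) (gadj 0 6 (by decide)))
          (iff_of_false (by decide) (gnadj 0 5 (by decide)))
          (iff_of_true (by decide) (gadj 6 5 (by decide)))
  have X5 : ∀ x, x ∉ C → G.Adj x (v 5) → x = v 4 ∨ x = v 6 := by
    intro x hx hx5
    by_contra hcon
    push_neg at hcon
    obtain ⟨hx4, hx6⟩ := hcon
    by_cases h3' : G.Adj x (v 3)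
    · have hnD1 : ∀ b, b ∈ D1 → ¬G.Adj x b := fun b hb h =>
        notA x b (v 3) (v 5) hb d2v3 d3v5 h h3' hx5
      exact free_contra7d Delta2 hH_D2 hD2 (v 1) (v 0) (v 2) (v 3) (v 4) (v 5) x
        (Ne.symm hx4)
        (iff_of_true (by decide) (gadj 1 0 (by decide)))
        (iff_of_true (by decide) (gadj 1 2 (by decide)))
        (iff_of_false (by decide) (gnadj 1 3 (by decide)))
        (iff_of_false (by decide) (gnadj 1 4 (by decide)))
        (iff_of_false (by decide) (gnadj 1 5 (by decide)))
        (iff_of_false (by decide) (fun h => hnD1 (v 1) d1v1 h.symm))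
        (iff_of_false (by decide) (gnadj 0 2 (by decide)))
        (iff_of_false (by decide) (gnadj 0 3 (by decide)))
        (iff_of_false (by decide) (gnadj 0 4 (by decide)))
        (iff_of_false (by decide) (gnadj 0 5 (by decide)))
        (iff_of_false (by decide) (fun h => hnD1 (v 0) d1v0 h.symm))
        (iff_of_true (by decide) (gadj 2 3 (by decide)))
        (iff_of_false (by decide) (gnadj 2 4 (by decide)))
        (iff_of_false (by decide) (gnadj 2 5 (by decide)))
        (iff_of_false (by decide) (hind xv2 hx))
        (iff_of_true (by decide) (gadj 3 4 (by decide)))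
        (iff_of_false (by decide) (gnadj 3 5 (by decide)))
        (iff_of_true (by decide) (h3'.symm))
        (iff_of_true (by decide) (gadj 4 5 (by decide)))
        (iff_of_false (by decide) (hind xv4 hx))
        (iff_of_true (by decide) (hx5.symm))
    · by_cases h1' : G.Adj x (v 1)
      ·
        exact free_contra6 (SimpleGraph.cycleGraph 6) hH_C6 hC6 x (v 1) (v 2) (v 3) (v 4) (v 5)
          (iff_of_true (by decide) (h1'))
          (iff_of_false (by decide) (hind hx xv2))
          (iff_of_false (by decide) (h3'))
          (iff_of_false (by decide) (hind hx xv4))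
          (iff_of_true (by decide) (hx5))
          (iff_of_true (by decide) (gadj 1 2 (by decide)))
          (iff_of_false (by decide) (gnadj 1 3 (by decide)))
          (iff_of_false (by decide) (gnadj 1 4 (by decide)))
          (iff_of_false (by decide) (gnadj 1 5 (by decide)))
          (iff_of_true (by decide) (gadj 2 3 (by decide)))
          (iff_of_false (by decide) (gnadj 2 4 (by decide)))
          (iff_of_false (by decide) (gnadj 2 5 (by decide)))
          (iff_of_true (by decide) (gadj 3 4 (by decide)))
          (iff_of_false (by decide) (gnadj 3 5 (by decide)))
          (iff_of_true (by decide) (gadj 4 5 (by decide)))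
      · by_cases h0' : G.Adj x (v 0)
        ·
          exact free_contra7d Delta2 hH_D2 hD2 (v 2) (v 3) (v 1) (v 0) (v 6) (v 5) x
            (Ne.symm hx6)
            (iff_of_true (by decide) (gadj 2 3 (by decide)))
            (iff_of_true (by decide) (gadj 2 1 (by decide)))
            (iff_of_false (by decide) (gnadj 2 0 (by decide)))
            (iff_of_false (by decide) (gnadj 2 6 (by decide)))
            (iff_of_false (by decide) (gnadj 2 5 (by decide)))
            (iff_of_false (by decide) (hind xv2 hx))
            (iff_of_false (by decide) (gnadj 3 1 (by decide)))
            (iff_of_false (by decide) (gnadj 3 0 (by decide)))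
            (iff_of_false (by decide) (gnadj 3 6 (by decide)))
            (iff_of_false (by decide) (gnadj 3 5 (by decide)))
            (iff_of_false (by decide) (fun h => h3' h.symm))
            (iff_of_true (by decide) (gadj 1 0 (by decide)))
            (iff_of_false (by decide) (gnadj 1 6 (by decide)))
            (iff_of_false (by decide) (gnadj 1 5 (by decide)))
            (iff_of_false (by decide) (fun h => h1' h.symm))
            (iff_of_true (by decide) (gadj 0 6 (by decide)))
            (iff_of_false (by decide) (gnadj 0 5 (by decide)))
            (iff_of_true (by decide) (h0'.symm))
            (iff_of_true (by decide) (gadj 6 5 (by decide)))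
            (iff_of_false (by decide) (hind xv6 hx))
            (iff_of_true (by decide) (hx5.symm))
        ·
          exact free_contra7 (SimpleGraph.pathGraph 7) hH_P7 hP7 x (v 5) (v 4) (v 3) (v 2) (v 1) (v 0)
            (iff_of_true (by decide) (hx5))
            (iff_of_false (by decide) (hind hx xv4))
            (iff_of_false (by decide) (h3'))
            (iff_of_false (by decide) (hind hx xv2))
            (iff_of_false (by decide) (h1'))
            (iff_of_false (by decide) (h0'))
            (iff_of_true (by decide) (gadj 5 4 (by decide)))
            (iff_of_false (by decide) (gnadj 5 3 (by decide)))
            (iff_of_false (by decide) (gnadj 5 2 (by decide)))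
            (iff_of_false (by decide) (gnadj 5 1 (by decide)))
            (iff_of_false (by decide) (gnadj 5 0 (by decide)))
            (iff_of_true (by decide) (gadj 4 3 (by decide)))
            (iff_of_false (by decide) (gnadj 4 2 (by decide)))
            (iff_of_false (by decide) (gnadj 4 1 (by decide)))
            (iff_of_false (by decide) (gnadj 4 0 (by decide)))
            (iff_of_true (by decide) (gadj 3 2 (by decide)))
            (iff_of_false (by decide) (gnadj 3 1 (by decide)))
            (iff_of_false (by decide) (gnadj 3 0 (by decide)))
            (iff_of_true (by decide) (gadj 2 1 (by decide)))
            (iff_of_false (by decide) (gnadj 2 0 (by decide)))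
            (iff_of_true (by decide) (gadj 1 0 (by decide)))
  have X3 : ∀ x, x ∉ C → G.Adj x (v 3) → x = v 2 ∨ x = v 4 := by
    intro x hx hx3
    by_contra hcon
    push_neg at hcon
    obtain ⟨hx2, hx4⟩ := hcon
    by_cases h5' : G.Adj x (v 5)
    · rcases X5 x hx h5' with h | h
      · exact hx4 h
      · rw [h] at hx3; exact n6D2 d2v3 hx3
    · by_cases h0' : G.Adj x (v 0)
      ·
        exact free_contra6 (SimpleGraph.cycleGraph 6) hH_C6 hC6 x (v 0) (v 6) (v 5) (v 4) (v 3)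
          (iff_of_true (by decide) (h0'))
          (iff_of_false (by decide) (hind hx xv6))
          (iff_of_false (by decide) (h5'))
          (iff_of_false (by decide) (hind hx xv4))
          (iff_of_true (by decide) (hx3))
          (iff_of_true (by decide) (gadj 0 6 (by decide)))
          (iff_of_false (by decide) (gnadj 0 5 (by decide)))
          (iff_of_false (by decide) (gnadj 0 4 (by decide)))
          (iff_of_false (by decide) (gnadj 0 3 (by decide)))
          (iff_of_true (by decide) (gadj 6 5 (by decide)))
          (iff_of_false (by decide) (gnadj 6 4 (by decide)))
          (iff_of_false (by decide) (gnadj 6 3 (by decide)))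
          (iff_of_true (by decide) (gadj 5 4 (by decide)))
          (iff_of_false (by decide) (gnadj 5 3 (by decide)))
          (iff_of_true (by decide) (gadj 4 3 (by decide)))
      · by_cases h1' : G.Adj x (v 1)
        ·
          exact free_contra7d Delta2 hH_D2 hD2 (v 6) (v 5) (v 0) (v 1) (v 2) (v 3) x
            (Ne.symm hx2)
            (iff_of_true (by decide) (gadj 6 5 (by decide)))
            (iff_of_true (by decide) (gadj 6 0 (by decide)))
            (iff_of_false (by decide) (gnadj 6 1 (by decide)))
            (iff_of_false (by decide) (gnadj 6 2 (by decide)))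
            (iff_of_false (by decide) (gnadj 6 3 (by decide)))
            (iff_of_false (by decide) (hind xv6 hx))
            (iff_of_false (by decide) (gnadj 5 0 (by decide)))
            (iff_of_false (by decide) (gnadj 5 1 (by decide)))
            (iff_of_false (by decide) (gnadj 5 2 (by decide)))
            (iff_of_false (by decide) (gnadj 5 3 (by decide)))
            (iff_of_false (by decide) (fun h => h5' h.symm))
            (iff_of_true (by decide) (gadj 0 1 (by decide)))
            (iff_of_false (by decide) (gnadj 0 2 (by decide)))
            (iff_of_false (by decide) (gnadj 0 3 (by decide)))
            (iff_of_false (by decide) (fun h => h0' h.symm))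
            (iff_of_true (by decide) (gadj 1 2 (by decide)))
            (iff_of_false (by decide) (gnadj 1 3 (by decide)))
            (iff_of_true (by decide) (h1'.symm))
            (iff_of_true (by decide) (gadj 2 3 (by decide)))
            (iff_of_false (by decide) (hind xv2 hx))
            (iff_of_true (by decide) (hx3.symm))
        ·
          exact free_contra7 (SimpleGraph.pathGraph 7) hH_P7 hP7 x (v 3) (v 2) (v 1) (v 0) (v 6) (v 5)
            (iff_of_true (by decide) (hx3))
            (iff_of_false (by decide) (hind hx xv2))
            (iff_of_false (by decide) (h1'))
            (iff_of_false (by decide) (h0'))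
            (iff_of_false (by decide) (hind hx xv6))
            (iff_of_false (by decide) (h5'))
            (iff_of_true (by decide) (gadj 3 2 (by decide)))
            (iff_of_false (by decide) (gnadj 3 1 (by decide)))
            (iff_of_false (by decide) (gnadj 3 0 (by decide)))
            (iff_of_false (by decide) (gnadj 3 6 (by decide)))
            (iff_of_false (by decide) (gnadj 3 5 (by decide)))
            (iff_of_true (by decide) (gadj 2 1 (by decide)))
            (iff_of_false (by decide) (gnadj 2 0 (by decide)))
            (iff_of_false (by decide) (gnadj 2 6 (by decide)))
            (iff_of_false (by decide) (gnadj 2 5 (by decide)))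
            (iff_of_true (by decide) (gadj 1 0 (by decide)))
            (iff_of_false (by decide) (gnadj 1 6 (by decide)))
            (iff_of_false (by decide) (gnadj 1 5 (by decide)))
            (iff_of_true (by decide) (gadj 0 6 (by decide)))
            (iff_of_false (by decide) (gnadj 0 5 (by decide)))
            (iff_of_true (by decide) (gadj 6 5 (by decide)))
  by_cases hD3s : ∀ a ∈ D3, a = v 5
  swap
  · -- D3 is not a singleton : Cc = (C \ {v 5}) ∪ {v 4, v 6}
    push_neg at hD3s
    obtain ⟨u0, hu0, hu0ne⟩ := hD3s
    have d1ne5 : ∀ {a}, a ∈ D1 → a ≠ v 5 := fun {a} ha h => dj13 ha (by rw [h]; exact d3v5)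
    have d2ne5 : ∀ {a}, a ∈ D2 → a ≠ v 5 := fun {a} ha h => dj23 ha (by rw [h]; exact d3v5)
    have hm4 : v 4 ∈ insert (v 4) (insert (v 6) (C \ {v 5})) := Set.mem_insert _ _
    have hm6 : v 6 ∈ insert (v 4) (insert (v 6) (C \ {v 5})) :=
      Set.mem_insert_of_mem _ (Set.mem_insert _ _)
    have hmC : ∀ {z}, z ∈ C → z ≠ v 5 → z ∈ insert (v 4) (insert (v 6) (C \ {v 5})) :=
      fun hz hne => Set.mem_insert_of_mem _ (Set.mem_insert_of_mem _ ⟨hz, hne⟩)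
    have hsub5 : ∀ c ∈ C, c ≠ v 5 → c ∈ insert (v 4) (insert (v 6) (C \ {v 5})) :=
      fun c h1 h2 => hmC h1 h2
    have edge : ∀ (a b : V) (ha : a ∈ insert (v 4) (insert (v 6) (C \ {v 5})))
        (hb : b ∈ insert (v 4) (insert (v 6) (C \ {v 5}))), G.Adj a b →
        (G.induce (insert (v 4) (insert (v 6) (C \ {v 5})))).Adj ⟨a, ha⟩ ⟨b, hb⟩ := by
      intro a b ha hb h
      simp only [SimpleGraph.comap_adj, Function.Embedding.coe_subtype]
      exact h
    have pick : ∀ u, ∀ (hu : u ∈ D3) (hne : u ≠ v 5), ∃ w', ∃ (h1 : w' ∈ insert (v 4)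
        (insert (v 6) (C \ {v 5}))), G.Adj w' (v 4) ∧ G.Adj w' (v 6) ∧
        (G.induce (insert (v 4) (insert (v 6) (C \ {v 5})))).Reachable
          ⟨u, hmC (d3sub hu) hne⟩ ⟨w', h1⟩ := by
      intro u hu hne
      obtain ⟨huC, h5C, hr⟩ := hu
      obtain ⟨w', hw'S, hw'ne, hw'adj, hw'reach⟩ := pen huC h5C hne hr
      have hw'D3 : w' ∈ D3 := Rc_adj hw'S mv5 hw'adj
      have hw'Cc : w' ∈ insert (v 4) (insert (v 6) (C \ {v 5})) := hmC hw'S hw'ne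
      obtain ⟨h4', h6'⟩ := F3 w' hw'D3 hw'adj
      exact ⟨w', hw'Cc, h4', h6', hw'reach _ hsub5 _ _⟩
    obtain ⟨w0, hw0Cc, hw04, hw06, hw0r⟩ := pick u0 hu0 hu0ne
    refine ⟨insert (v 4) (insert (v 6) (C \ {v 5})), ⟨?_, ?_⟩, ?_⟩
    · intro a b h
      rcases hC h with ha | hb
      · by_cases h5a : a = v 5
        · subst h5a
          by_cases hbC : b ∈ C
          · exact Or.inr (hmC hbC (fun e => G.irrefl (e ▸ h)))
          · rcases X5 b hbC h.symm with e | e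
            · exact Or.inr (by rw [e]; exact hm4)
            · exact Or.inr (by rw [e]; exact hm6)
        · exact Or.inl (hmC ha h5a)
      · by_cases h5b : b = v 5
        · subst h5b
          by_cases haC : a ∈ C
          · exact Or.inl (hmC haC (fun e => G.irrefl (e ▸ h)))
          · rcases X5 a haC h with e | e
            · exact Or.inl (by rw [e]; exact hm4)
            · exact Or.inl (by rw [e]; exact hm6)
        · exact Or.inr (hmC hb h5b)
    · rw [SimpleGraph.connected_iff]
      have hub : ∀ z : ↥(insert (v 4) (insert (v 6) (C \ {v 5}))),
          (G.induce (insert (v 4) (insert (v 6) (C \ {v 5})))).Reachable z ⟨v 4, hm4⟩ := by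
        rintro ⟨z, hz⟩
        rcases hz with rfl | hz
        · exact Reachable.refl _
        rcases hz with rfl | hz
        · exact ((edge _ _ hm6 hw0Cc hw06.symm).reachable).trans
            ((edge _ _ hw0Cc hm4 hw04).reachable)
        obtain ⟨hzC, hzne0⟩ := hz
        have hzne : z ≠ v 5 := fun e => hzne0 (by rw [e]; exact Set.mem_singleton _)
        rcases htri z hzC with h | h | h
        · have h0m : v 0 ∈ insert (v 4) (insert (v 6) (C \ {v 5})) := hmC mv0 (vne 0 5 (by decide))
          have hreach : (G.induce (insert (v 4) (insert (v 6) (C \ {v 5})))).Reachable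
              ⟨z, hmC hzC hzne⟩ ⟨v 0, h0m⟩ := by
            obtain ⟨hzC', h0C, hr⟩ := h
            exact reach_mono hr (fun c hc => hmC c.2 (d1ne5 ⟨c.2, mv0, hc⟩)) _ _
          exact hreach.trans (((edge _ _ h0m hm6 (gadj 0 6 (by decide))).reachable).trans
            (((edge _ _ hm6 hw0Cc hw06.symm).reachable).trans
              ((edge _ _ hw0Cc hm4 hw04).reachable)))
        · have h3m : v 3 ∈ insert (v 4) (insert (v 6) (C \ {v 5})) := hmC mv3 (vne 3 5 (by decide))
          have hreach : (G.induce (insert (v 4) (insert (v 6) (C \ {v 5})))).Reachable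
              ⟨z, hmC hzC hzne⟩ ⟨v 3, h3m⟩ := by
            obtain ⟨hzC', h3C, hr⟩ := h
            exact reach_mono hr (fun c hc => hmC c.2 (d2ne5 ⟨c.2, mv3, hc⟩)) _ _
          exact hreach.trans ((edge _ _ h3m hm4 (gadj 3 4 (by decide))).reachable)
        · obtain ⟨wz, hwzCc, hwz4, hwz6, hwzr⟩ := pick z h hzne
          exact hwzr.trans ((edge _ _ hwzCc hm4 hwz4).reachable)
      exact ⟨fun x y => (hub x).trans (hub y).symm, ⟨⟨v 4, hm4⟩⟩⟩
    · have h1 : (C \ {v 5}).ncard = C.ncard - 1 := Set.ncard_diff_singleton_of_mem mv5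
      have h2 : v 6 ∉ C \ {v 5} := fun h => xv6 h.1
      have h3' : v 4 ∉ insert (v 6) (C \ {v 5}) := by
        simp only [Set.mem_insert_iff]
        rintro (h | h)
        · exact vne 4 6 (by decide) h
        · exact xv4 h.1
      rw [Set.ncard_insert_of_notMem h3' (Set.toFinite _),
        Set.ncard_insert_of_notMem h2 (Set.toFinite _), h1]
      omega
  by_cases hD2s : ∀ a ∈ D2, a = v 3
  swap
  · -- D2 is not a singleton : Cc = (C \ {v 3}) ∪ {v 2, v 4}
    push_neg at hD2s
    obtain ⟨u0, hu0, hu0ne⟩ := hD2s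
    have d1ne3 : ∀ {a}, a ∈ D1 → a ≠ v 3 := fun {a} ha h => dj12 ha (by rw [h]; exact d2v3)
    have d3ne3 : ∀ {a}, a ∈ D3 → a ≠ v 3 := fun {a} ha h => dj23 (by rw [h]; exact d2v3) ha
    have hm2 : v 2 ∈ insert (v 2) (insert (v 4) (C \ {v 3})) := Set.mem_insert _ _
    have hm4 : v 4 ∈ insert (v 2) (insert (v 4) (C \ {v 3})) :=
      Set.mem_insert_of_mem _ (Set.mem_insert _ _)
    have hmC : ∀ {z}, z ∈ C → z ≠ v 3 → z ∈ insert (v 2) (insert (v 4) (C \ {v 3})) :=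
      fun hz hne => Set.mem_insert_of_mem _ (Set.mem_insert_of_mem _ ⟨hz, hne⟩)
    have hsub3 : ∀ c ∈ C, c ≠ v 3 → c ∈ insert (v 2) (insert (v 4) (C \ {v 3})) :=
      fun c h1 h2 => hmC h1 h2
    have edge : ∀ (a b : V) (ha : a ∈ insert (v 2) (insert (v 4) (C \ {v 3})))
        (hb : b ∈ insert (v 2) (insert (v 4) (C \ {v 3}))), G.Adj a b →
        (G.induce (insert (v 2) (insert (v 4) (C \ {v 3})))).Adj ⟨a, ha⟩ ⟨b, hb⟩ := by
      intro a b ha hb h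
      simp only [SimpleGraph.comap_adj, Function.Embedding.coe_subtype]
      exact h
    have pick : ∀ u, ∀ (hu : u ∈ D2) (hne : u ≠ v 3), ∃ w', ∃ (h1 : w' ∈ insert (v 2)
        (insert (v 4) (C \ {v 3}))), G.Adj w' (v 2) ∧ G.Adj w' (v 4) ∧
        (G.induce (insert (v 2) (insert (v 4) (C \ {v 3})))).Reachable
          ⟨u, hmC (d2sub hu) hne⟩ ⟨w', h1⟩ := by
      intro u hu hne
      obtain ⟨huC, h3C, hr⟩ := hu
      obtain ⟨w', hw'S, hw'ne, hw'adj, hw'reach⟩ := pen huC h3C hne hr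
      have hw'D2 : w' ∈ D2 := Rc_adj hw'S mv3 hw'adj
      have hw'Cc : w' ∈ insert (v 2) (insert (v 4) (C \ {v 3})) := hmC hw'S hw'ne
      obtain ⟨h2', h4'⟩ := F2 w' hw'D2 hw'adj
      exact ⟨w', hw'Cc, h2', h4', hw'reach _ hsub3 _ _⟩
    obtain ⟨w0, hw0Cc, hw02, hw04, hw0r⟩ := pick u0 hu0 hu0ne
    refine ⟨insert (v 2) (insert (v 4) (C \ {v 3})), ⟨?_, ?_⟩, ?_⟩
    · intro a b h
      rcases hC h with ha | hb
      · by_cases h3a : a = v 3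
        · subst h3a
          by_cases hbC : b ∈ C
          · exact Or.inr (hmC hbC (fun e => G.irrefl (e ▸ h)))
          · rcases X3 b hbC h.symm with e | e
            · exact Or.inr (by rw [e]; exact hm2)
            · exact Or.inr (by rw [e]; exact hm4)
        · exact Or.inl (hmC ha h3a)
      · by_cases h3b : b = v 3
        · subst h3b
          by_cases haC : a ∈ C
          · exact Or.inl (hmC haC (fun e => G.irrefl (e ▸ h)))
          · rcases X3 a haC h with e | e
            · exact Or.inl (by rw [e]; exact hm2)
            · exact Or.inl (by rw [e]; exact hm4)
        · exact Or.inr (hmC hb h3b)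
    · rw [SimpleGraph.connected_iff]
      have hub : ∀ z : ↥(insert (v 2) (insert (v 4) (C \ {v 3}))),
          (G.induce (insert (v 2) (insert (v 4) (C \ {v 3})))).Reachable z ⟨v 2, hm2⟩ := by
        rintro ⟨z, hz⟩
        rcases hz with rfl | hz
        · exact Reachable.refl _
        rcases hz with rfl | hz
        · exact ((edge _ _ hm4 hw0Cc hw04.symm).reachable).trans
            ((edge _ _ hw0Cc hm2 hw02).reachable)
        obtain ⟨hzC, hzne0⟩ := hz
        have hzne : z ≠ v 3 := fun e => hzne0 (by rw [e]; exact Set.mem_singleton _)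
        rcases htri z hzC with h | h | h
        · have h1m : v 1 ∈ insert (v 2) (insert (v 4) (C \ {v 3})) := hmC mv1 (vne 1 3 (by decide))
          have h0m : v 0 ∈ insert (v 2) (insert (v 4) (C \ {v 3})) := hmC mv0 (vne 0 3 (by decide))
          have hreach : (G.induce (insert (v 2) (insert (v 4) (C \ {v 3})))).Reachable
              ⟨z, hmC hzC hzne⟩ ⟨v 0, h0m⟩ := by
            obtain ⟨hzC', h0C, hr⟩ := h
            exact reach_mono hr (fun c hc => hmC c.2 (d1ne3 ⟨c.2, mv0, hc⟩)) _ _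
          exact hreach.trans (((edge _ _ h0m h1m (gadj 0 1 (by decide))).reachable).trans
            ((edge _ _ h1m hm2 (gadj 1 2 (by decide))).reachable))
        · obtain ⟨wz, hwzCc, hwz2, hwz4, hwzr⟩ := pick z h hzne
          exact hwzr.trans ((edge _ _ hwzCc hm2 hwz2).reachable)
        · have e5 := hD3s z h
          subst e5
          have h5m : v 5 ∈ insert (v 2) (insert (v 4) (C \ {v 3})) := hmC mv5 (vne 5 3 (by decide))
          exact ((edge _ _ h5m hm4 (gadj 5 4 (by decide))).reachable).trans
            (((edge _ _ hm4 hw0Cc hw04.symm).reachable).trans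
              ((edge _ _ hw0Cc hm2 hw02).reachable))
      exact ⟨fun x y => (hub x).trans (hub y).symm, ⟨⟨v 2, hm2⟩⟩⟩
    · have h1 : (C \ {v 3}).ncard = C.ncard - 1 := Set.ncard_diff_singleton_of_mem mv3
      have h2 : v 4 ∉ C \ {v 3} := fun h => xv4 h.1
      have h3' : v 2 ∉ insert (v 4) (C \ {v 3}) := by
        simp only [Set.mem_insert_iff]
        rintro (h | h)
        · exact vne 2 4 (by decide) h
        · exact xv2 h.1
      rw [Set.ncard_insert_of_notMem h3' (Set.toFinite _),
        Set.ncard_insert_of_notMem h2 (Set.toFinite _), h1]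
      omega

  -- Case C : D2 = {v3} and D3 = {v5}
  have Nv3 : ∀ y, G.Adj (v 3) y → y = v 2 ∨ y = v 4 := by
    intro y h
    by_cases hy : y ∈ C
    · exfalso
      have hyD2 : y ∈ D2 := Rc_adj hy mv3 h.symm
      have := hD2s y hyD2
      subst this
      exact G.irrefl h
    · exact X3 y hy h.symm
  have Nv5 : ∀ y, G.Adj (v 5) y → y = v 4 ∨ y = v 6 := by
    intro y h
    by_cases hy : y ∈ C
    · exfalso
      have hyD3 : y ∈ D3 := Rc_adj hy mv5 h.symm
      have := hD3s y hyD3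
      subst this
      exact G.irrefl h
    · exact X5 y hy h.symm
  have Nv4 : ∀ y, G.Adj (v 4) y → y = v 3 ∨ y = v 5 := by
    intro y h
    by_cases hy : y ∈ C
    · rcases htri y hy with hh | hh | hh
      · exact absurd h (n4D1 hh)
      · exact Or.inl (hD2s y hh)
      · exact Or.inr (hD3s y hh)
    · exact absurd h (hind xv4 hy)
  have nA3 : ∀ {c}, c ∈ C → ¬G.Adj c (v 3) := by
    intro c hc h
    rcases Nv3 c h.symm with e | e
    · exact xv2 (e ▸ hc)
    · exact xv4 (e ▸ hc)
  have nA5 : ∀ {c}, c ∈ C → ¬G.Adj c (v 5) := by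
    intro c hc h
    rcases Nv5 c h.symm with e | e
    · exact xv4 (e ▸ hc)
    · exact xv6 (e ▸ hc)
  have nA4 : ∀ {c}, c ∈ C → c ≠ v 3 → c ≠ v 5 → ¬G.Adj c (v 4) := by
    intro c hc h3c h5c h
    rcases Nv4 c h.symm with e | e
    · exact h3c e
    · exact h5c e
  have B3 : ∀ c, G.Adj c (v 2) → G.Adj c (v 6) → False := by
    intro c h2 h6
    have hc : c ∈ C := (hC h2).resolve_right xv2
    have hc3 : c ≠ v 3 := by
      intro e
      rcases Nv3 (v 6) (by rw [← e]; exact h6) with e2 | e2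
      · exact vne 6 2 (by decide) e2
      · exact vne 6 4 (by decide) e2
    have hc5 : c ≠ v 5 := by
      intro e
      rcases Nv5 (v 2) (by rw [← e]; exact h2) with e2 | e2
      · exact vne 2 4 (by decide) e2
      · exact vne 2 6 (by decide) e2
    exact free_contra6 (SimpleGraph.cycleGraph 6) hH_C6 hC6 c (v 2) (v 3) (v 4) (v 5) (v 6)
      (iff_of_true (by decide) (h2))
      (iff_of_false (by decide) (nA3 hc))
      (iff_of_false (by decide) (nA4 hc hc3 hc5))
      (iff_of_false (by decide) (nA5 hc))
      (iff_of_true (by decide) (h6))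
      (iff_of_true (by decide) (gadj 2 3 (by decide)))
      (iff_of_false (by decide) (gnadj 2 4 (by decide)))
      (iff_of_false (by decide) (gnadj 2 5 (by decide)))
      (iff_of_false (by decide) (gnadj 2 6 (by decide)))
      (iff_of_true (by decide) (gadj 3 4 (by decide)))
      (iff_of_false (by decide) (gnadj 3 5 (by decide)))
      (iff_of_false (by decide) (gnadj 3 6 (by decide)))
      (iff_of_true (by decide) (gadj 4 5 (by decide)))
      (iff_of_false (by decide) (gnadj 4 6 (by decide)))
      (iff_of_true (by decide) (gadj 5 6 (by decide)))
  have B4 : ∀ c, c ∈ C → c ≠ v 3 → G.Adj c (v 2) → c = v 1 ∨ G.Adj c (v 1) := by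
    intro c hc hc3 h2
    by_cases e1 : c = v 1
    · exact Or.inl e1
    by_cases a1 : G.Adj c (v 1)
    · exact Or.inr a1
    exfalso
    have hc5 : c ≠ v 5 := by
      intro e
      rcases Nv5 (v 2) (by rw [← e]; exact h2) with e2 | e2
      · exact vne 2 4 (by decide) e2
      · exact vne 2 6 (by decide) e2
    by_cases a0 : G.Adj c (v 0)
    ·
      exact free_contra7d Delta2 hH_D2 hD2 (v 4) (v 5) (v 3) (v 2) (v 1) (v 0) c
        (Ne.symm e1)
        (iff_of_true (by decide) (gadj 4 5 (by decide)))
        (iff_of_true (by decide) (gadj 4 3 (by decide)))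
        (iff_of_false (by decide) (gnadj 4 2 (by decide)))
        (iff_of_false (by decide) (gnadj 4 1 (by decide)))
        (iff_of_false (by decide) (gnadj 4 0 (by decide)))
        (iff_of_false (by decide) (fun h => nA4 hc hc3 hc5 h.symm))
        (iff_of_false (by decide) (gnadj 5 3 (by decide)))
        (iff_of_false (by decide) (gnadj 5 2 (by decide)))
        (iff_of_false (by decide) (gnadj 5 1 (by decide)))
        (iff_of_false (by decide) (gnadj 5 0 (by decide)))
        (iff_of_false (by decide) (fun h => nA5 hc h.symm))
        (iff_of_true (by decide) (gadj 3 2 (by decide)))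
        (iff_of_false (by decide) (gnadj 3 1 (by decide)))
        (iff_of_false (by decide) (gnadj 3 0 (by decide)))
        (iff_of_false (by decide) (fun h => nA3 hc h.symm))
        (iff_of_true (by decide) (gadj 2 1 (by decide)))
        (iff_of_false (by decide) (gnadj 2 0 (by decide)))
        (iff_of_true (by decide) (h2.symm))
        (iff_of_true (by decide) (gadj 1 0 (by decide)))
        (iff_of_false (by decide) (fun h => a1 h.symm))
        (iff_of_true (by decide) (a0.symm))
    ·
      exact free_contra7 (SimpleGraph.pathGraph 7) hH_P7 hP7 c (v 2) (v 3) (v 4) (v 5) (v 6) (v 0)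
        (iff_of_true (by decide) (h2))
        (iff_of_false (by decide) (nA3 hc))
        (iff_of_false (by decide) (nA4 hc hc3 hc5))
        (iff_of_false (by decide) (nA5 hc))
        (iff_of_false (by decide) (fun h => B3 c h2 h))
        (iff_of_false (by decide) (a0))
        (iff_of_true (by decide) (gadj 2 3 (by decide)))
        (iff_of_false (by decide) (gnadj 2 4 (by decide)))
        (iff_of_false (by decide) (gnadj 2 5 (by decide)))
        (iff_of_false (by decide) (gnadj 2 6 (by decide)))
        (iff_of_false (by decide) (gnadj 2 0 (by decide)))
        (iff_of_true (by decide) (gadj 3 4 (by decide)))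
        (iff_of_false (by decide) (gnadj 3 5 (by decide)))
        (iff_of_false (by decide) (gnadj 3 6 (by decide)))
        (iff_of_false (by decide) (gnadj 3 0 (by decide)))
        (iff_of_true (by decide) (gadj 4 5 (by decide)))
        (iff_of_false (by decide) (gnadj 4 6 (by decide)))
        (iff_of_false (by decide) (gnadj 4 0 (by decide)))
        (iff_of_true (by decide) (gadj 5 6 (by decide)))
        (iff_of_false (by decide) (gnadj 5 0 (by decide)))
        (iff_of_true (by decide) (gadj 6 0 (by decide)))
  have B5 : ∀ c, c ∈ C → c ≠ v 5 → G.Adj c (v 6) → c = v 0 ∨ G.Adj c (v 0) := by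
    intro c hc hc5 h6
    by_cases e0 : c = v 0
    · exact Or.inl e0
    by_cases a0 : G.Adj c (v 0)
    · exact Or.inr a0
    exfalso
    have hc3 : c ≠ v 3 := by
      intro e
      rcases Nv3 (v 6) (by rw [← e]; exact h6) with e2 | e2
      · exact vne 6 2 (by decide) e2
      · exact vne 6 4 (by decide) e2
    by_cases a1 : G.Adj c (v 1)
    ·
      exact free_contra7d Delta2 hH_D2 hD2 (v 4) (v 3) (v 5) (v 6) (v 0) (v 1) c
        (Ne.symm e0)
        (iff_of_true (by decide) (gadj 4 3 (by decide)))
        (iff_of_true (by decide) (gadj 4 5 (by decide)))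
        (iff_of_false (by decide) (gnadj 4 6 (by decide)))
        (iff_of_false (by decide) (gnadj 4 0 (by decide)))
        (iff_of_false (by decide) (gnadj 4 1 (by decide)))
        (iff_of_false (by decide) (fun h => nA4 hc hc3 hc5 h.symm))
        (iff_of_false (by decide) (gnadj 3 5 (by decide)))
        (iff_of_false (by decide) (gnadj 3 6 (by decide)))
        (iff_of_false (by decide) (gnadj 3 0 (by decide)))
        (iff_of_false (by decide) (gnadj 3 1 (by decide)))
        (iff_of_false (by decide) (fun h => nA3 hc h.symm))
        (iff_of_true (by decide) (gadj 5 6 (by decide)))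
        (iff_of_false (by decide) (gnadj 5 0 (by decide)))
        (iff_of_false (by decide) (gnadj 5 1 (by decide)))
        (iff_of_false (by decide) (fun h => nA5 hc h.symm))
        (iff_of_true (by decide) (gadj 6 0 (by decide)))
        (iff_of_false (by decide) (gnadj 6 1 (by decide)))
        (iff_of_true (by decide) (h6.symm))
        (iff_of_true (by decide) (gadj 0 1 (by decide)))
        (iff_of_false (by decide) (fun h => a0 h.symm))
        (iff_of_true (by decide) (a1.symm))
    ·
      exact free_contra7 (SimpleGraph.pathGraph 7) hH_P7 hP7 c (v 6) (v 5) (v 4) (v 3) (v 2) (v 1)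
        (iff_of_true (by decide) (h6))
        (iff_of_false (by decide) (nA5 hc))
        (iff_of_false (by decide) (nA4 hc hc3 hc5))
        (iff_of_false (by decide) (nA3 hc))
        (iff_of_false (by decide) (fun h => B3 c h h6))
        (iff_of_false (by decide) (a1))
        (iff_of_true (by decide) (gadj 6 5 (by decide)))
        (iff_of_false (by decide) (gnadj 6 4 (by decide)))
        (iff_of_false (by decide) (gnadj 6 3 (by decide)))
        (iff_of_false (by decide) (gnadj 6 2 (by decide)))
        (iff_of_false (by decide) (gnadj 6 1 (by decide)))
        (iff_of_true (by decide) (gadj 5 4 (by decide)))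
        (iff_of_false (by decide) (gnadj 5 3 (by decide)))
        (iff_of_false (by decide) (gnadj 5 2 (by decide)))
        (iff_of_false (by decide) (gnadj 5 1 (by decide)))
        (iff_of_true (by decide) (gadj 4 3 (by decide)))
        (iff_of_false (by decide) (gnadj 4 2 (by decide)))
        (iff_of_false (by decide) (gnadj 4 1 (by decide)))
        (iff_of_true (by decide) (gadj 3 2 (by decide)))
        (iff_of_false (by decide) (gnadj 3 1 (by decide)))
        (iff_of_true (by decide) (gadj 2 1 (by decide)))
  have B6 : ∀ c, c ∈ C → c ≠ v 0 → c ≠ v 1 → G.Adj c (v 0) ∨ G.Adj c (v 1) →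
      G.Adj c (v 2) ∨ G.Adj c (v 6) := by
    intro c hc hc0 hc1 hor
    by_contra hcon
    push_neg at hcon
    obtain ⟨n2, n6⟩ := hcon
    have hc3 : c ≠ v 3 := by
      intro e
      subst e
      rcases hor with h | h
      · exact gnadj 3 0 (by decide) h
      · exact gnadj 3 1 (by decide) h
    have hc5 : c ≠ v 5 := by
      intro e
      subst e
      rcases hor with h | h
      · exact gnadj 5 0 (by decide) h
      · exact gnadj 5 1 (by decide) h
    rcases hor with a0 | a1
    ·
      exact free_contra7 (SimpleGraph.pathGraph 7) hH_P7 hP7 c (v 0) (v 6) (v 5) (v 4) (v 3) (v 2)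
        (iff_of_true (by decide) (a0))
        (iff_of_false (by decide) (n6))
        (iff_of_false (by decide) (nA5 hc))
        (iff_of_false (by decide) (nA4 hc hc3 hc5))
        (iff_of_false (by decide) (nA3 hc))
        (iff_of_false (by decide) (n2))
        (iff_of_true (by decide) (gadj 0 6 (by decide)))
        (iff_of_false (by decide) (gnadj 0 5 (by decide)))
        (iff_of_false (by decide) (gnadj 0 4 (by decide)))
        (iff_of_false (by decide) (gnadj 0 3 (by decide)))
        (iff_of_false (by decide) (gnadj 0 2 (by decide)))
        (iff_of_true (by decide) (gadj 6 5 (by decide)))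
        (iff_of_false (by decide) (gnadj 6 4 (by decide)))
        (iff_of_false (by decide) (gnadj 6 3 (by decide)))
        (iff_of_false (by decide) (gnadj 6 2 (by decide)))
        (iff_of_true (by decide) (gadj 5 4 (by decide)))
        (iff_of_false (by decide) (gnadj 5 3 (by decide)))
        (iff_of_false (by decide) (gnadj 5 2 (by decide)))
        (iff_of_true (by decide) (gadj 4 3 (by decide)))
        (iff_of_false (by decide) (gnadj 4 2 (by decide)))
        (iff_of_true (by decide) (gadj 3 2 (by decide)))
    ·
      exact free_contra7 (SimpleGraph.pathGraph 7) hH_P7 hP7 c (v 1) (v 2) (v 3) (v 4) (v 5) (v 6)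
        (iff_of_true (by decide) (a1))
        (iff_of_false (by decide) (n2))
        (iff_of_false (by decide) (nA3 hc))
        (iff_of_false (by decide) (nA4 hc hc3 hc5))
        (iff_of_false (by decide) (nA5 hc))
        (iff_of_false (by decide) (n6))
        (iff_of_true (by decide) (gadj 1 2 (by decide)))
        (iff_of_false (by decide) (gnadj 1 3 (by decide)))
        (iff_of_false (by decide) (gnadj 1 4 (by decide)))
        (iff_of_false (by decide) (gnadj 1 5 (by decide)))
        (iff_of_false (by decide) (gnadj 1 6 (by decide)))
        (iff_of_true (by decide) (gadj 2 3 (by decide)))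
        (iff_of_false (by decide) (gnadj 2 4 (by decide)))
        (iff_of_false (by decide) (gnadj 2 5 (by decide)))
        (iff_of_false (by decide) (gnadj 2 6 (by decide)))
        (iff_of_true (by decide) (gadj 3 4 (by decide)))
        (iff_of_false (by decide) (gnadj 3 5 (by decide)))
        (iff_of_false (by decide) (gnadj 3 6 (by decide)))
        (iff_of_true (by decide) (gadj 4 5 (by decide)))
        (iff_of_false (by decide) (gnadj 4 6 (by decide)))
        (iff_of_true (by decide) (gadj 5 6 (by decide)))
  have B10 : ∀ w' u', w' ∈ C → u' ∈ C → G.Adj w' u' → (G.Adj u' (v 2) ∨ G.Adj u' (v 6)) →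
      w' ≠ v 0 → w' ≠ v 1 → ¬G.Adj w' (v 0) → ¬G.Adj w' (v 1) → False := by
    intro w' u' hw hu hwu hor hw0 hw1 nw0 nw1
    have hw3 : w' ≠ v 3 := fun e => nA3 hu (by rw [← e]; exact hwu.symm)
    have hw5 : w' ≠ v 5 := fun e => nA5 hu (by rw [← e]; exact hwu.symm)
    have hu3 : u' ≠ v 3 := fun e => nA3 hw (by rw [← e]; exact hwu)
    have hu5 : u' ≠ v 5 := fun e => nA5 hw (by rw [← e]; exact hwu)
    rcases hor with hu2 | hu6
    ·
      exact free_contra7 (SimpleGraph.pathGraph 7) hH_P7 hP7 w' u' (v 2) (v 3) (v 4) (v 5) (v 6)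
        (iff_of_true (by decide) (hwu))
        (iff_of_false (by decide) (fun h => (B4 w' hw hw3 h).elim hw1 nw1))
        (iff_of_false (by decide) (nA3 hw))
        (iff_of_false (by decide) (nA4 hw hw3 hw5))
        (iff_of_false (by decide) (nA5 hw))
        (iff_of_false (by decide) (fun h => (B5 w' hw hw5 h).elim hw0 nw0))
        (iff_of_true (by decide) (hu2))
        (iff_of_false (by decide) (nA3 hu))
        (iff_of_false (by decide) (nA4 hu hu3 hu5))
        (iff_of_false (by decide) (nA5 hu))
        (iff_of_false (by decide) (fun h => B3 u' hu2 h))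
        (iff_of_true (by decide) (gadj 2 3 (by decide)))
        (iff_of_false (by decide) (gnadj 2 4 (by decide)))
        (iff_of_false (by decide) (gnadj 2 5 (by decide)))
        (iff_of_false (by decide) (gnadj 2 6 (by decide)))
        (iff_of_true (by decide) (gadj 3 4 (by decide)))
        (iff_of_false (by decide) (gnadj 3 5 (by decide)))
        (iff_of_false (by decide) (gnadj 3 6 (by decide)))
        (iff_of_true (by decide) (gadj 4 5 (by decide)))
        (iff_of_false (by decide) (gnadj 4 6 (by decide)))
        (iff_of_true (by decide) (gadj 5 6 (by decide)))
    ·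
      exact free_contra7 (SimpleGraph.pathGraph 7) hH_P7 hP7 w' u' (v 6) (v 5) (v 4) (v 3) (v 2)
        (iff_of_true (by decide) (hwu))
        (iff_of_false (by decide) (fun h => (B5 w' hw hw5 h).elim hw0 nw0))
        (iff_of_false (by decide) (nA5 hw))
        (iff_of_false (by decide) (nA4 hw hw3 hw5))
        (iff_of_false (by decide) (nA3 hw))
        (iff_of_false (by decide) (fun h => (B4 w' hw hw3 h).elim hw1 nw1))
        (iff_of_true (by decide) (hu6))
        (iff_of_false (by decide) (nA5 hu))
        (iff_of_false (by decide) (nA4 hu hu3 hu5))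
        (iff_of_false (by decide) (nA3 hu))
        (iff_of_false (by decide) (fun h => B3 u' h hu6))
        (iff_of_true (by decide) (gadj 6 5 (by decide)))
        (iff_of_false (by decide) (gnadj 6 4 (by decide)))
        (iff_of_false (by decide) (gnadj 6 3 (by decide)))
        (iff_of_false (by decide) (gnadj 6 2 (by decide)))
        (iff_of_true (by decide) (gadj 5 4 (by decide)))
        (iff_of_false (by decide) (gnadj 5 3 (by decide)))
        (iff_of_false (by decide) (gnadj 5 2 (by decide)))
        (iff_of_true (by decide) (gadj 4 3 (by decide)))
        (iff_of_false (by decide) (gnadj 4 2 (by decide)))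
        (iff_of_true (by decide) (gadj 3 2 (by decide)))
  have B9 : ∀ a, a ∈ D1 → a = v 0 ∨ a = v 1 ∨ G.Adj a (v 0) ∨ G.Adj a (v 1) := by
    have key : ∀ (y c : ↥C) (p : (G.induce C).Walk c y), (y : V) = v 0 →
        (c : V) = v 0 ∨ (c : V) = v 1 ∨ G.Adj (c : V) (v 0) ∨ G.Adj (c : V) (v 1) := by
      intro y c p
      induction p with
      | nil => intro h; exact Or.inl h
      | @cons a' b' c' h q ih =>
        intro hy
        have hb := ih hy
        have hGadj : G.Adj (a' : V) (b' : V) := h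
        by_cases e0 : (a' : V) = v 0
        · exact Or.inl e0
        by_cases e1 : (a' : V) = v 1
        · exact Or.inr (Or.inl e1)
        by_cases ad0 : G.Adj (a' : V) (v 0)
        · exact Or.inr (Or.inr (Or.inl ad0))
        by_cases ad1 : G.Adj (a' : V) (v 1)
        · exact Or.inr (Or.inr (Or.inr ad1))
        exfalso
        rcases hb with hb | hb | hb | hb
        · exact ad0 (by rw [← hb]; exact hGadj)
        · exact ad1 (by rw [← hb]; exact hGadj)
        · by_cases f0 : (b' : V) = v 0
          · exact ad0 (by rw [← f0]; exact hGadj)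
          by_cases f1 : (b' : V) = v 1
          · exact ad1 (by rw [← f1]; exact hGadj)
          exact B10 (a' : V) (b' : V) a'.2 b'.2 hGadj (B6 (b' : V) b'.2 f0 f1 (Or.inl hb))
            e0 e1 ad0 ad1
        · by_cases f0 : (b' : V) = v 0
          · exact ad0 (by rw [← f0]; exact hGadj)
          by_cases f1 : (b' : V) = v 1
          · exact ad1 (by rw [← f1]; exact hGadj)
          exact B10 (a' : V) (b' : V) a'.2 b'.2 hGadj (B6 (b' : V) b'.2 f0 f1 (Or.inr hb))
            e0 e1 ad0 ad1
    intro a ha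
    obtain ⟨haC, h0C, hr⟩ := ha
    obtain ⟨p⟩ := hr
    exact key ⟨v 0, h0C⟩ ⟨a, haC⟩ p rfl
  have B11 : ∀ x : V, x ∈ C ∨ x = v 2 ∨ x = v 4 ∨ x = v 6 := by
    intro x
    by_contra hcon
    push_neg at hcon
    obtain ⟨hx, hx2, hx4, hx6⟩ := hcon
    have nX3 : ¬G.Adj x (v 3) := fun hh => (X3 x hx hh).elim hx2 hx4
    have nX5 : ¬G.Adj x (v 5) := fun hh => (X5 x hx hh).elim hx4 hx6
    have noNbr : ∀ c, ¬G.Adj x c := by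
      intro c h
      have hcC : c ∈ C := (hC h).resolve_left hx
      rcases htri c hcC with hD | hD | hD
      · by_cases e0 : c = v 0
        · subst e0
          exact free_contra7 (SimpleGraph.pathGraph 7) hH_P7 hP7 x (v 0) (v 6) (v 5) (v 4) (v 3) (v 2)
            (iff_of_true (by decide) (h))
            (iff_of_false (by decide) (hind hx xv6))
            (iff_of_false (by decide) (nX5))
            (iff_of_false (by decide) (hind hx xv4))
            (iff_of_false (by decide) (nX3))
            (iff_of_false (by decide) (hind hx xv2))
            (iff_of_true (by decide) (gadj 0 6 (by decide)))
            (iff_of_false (by decide) (gnadj 0 5 (by decide)))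
            (iff_of_false (by decide) (gnadj 0 4 (by decide)))
            (iff_of_false (by decide) (gnadj 0 3 (by decide)))
            (iff_of_false (by decide) (gnadj 0 2 (by decide)))
            (iff_of_true (by decide) (gadj 6 5 (by decide)))
            (iff_of_false (by decide) (gnadj 6 4 (by decide)))
            (iff_of_false (by decide) (gnadj 6 3 (by decide)))
            (iff_of_false (by decide) (gnadj 6 2 (by decide)))
            (iff_of_true (by decide) (gadj 5 4 (by decide)))
            (iff_of_false (by decide) (gnadj 5 3 (by decide)))
            (iff_of_false (by decide) (gnadj 5 2 (by decide)))
            (iff_of_true (by decide) (gadj 4 3 (by decide)))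
            (iff_of_false (by decide) (gnadj 4 2 (by decide)))
            (iff_of_true (by decide) (gadj 3 2 (by decide)))
        by_cases e1 : c = v 1
        · subst e1
          exact free_contra7 (SimpleGraph.pathGraph 7) hH_P7 hP7 x (v 1) (v 2) (v 3) (v 4) (v 5) (v 6)
            (iff_of_true (by decide) (h))
            (iff_of_false (by decide) (hind hx xv2))
            (iff_of_false (by decide) (nX3))
            (iff_of_false (by decide) (hind hx xv4))
            (iff_of_false (by decide) (nX5))
            (iff_of_false (by decide) (hind hx xv6))
            (iff_of_true (by decide) (gadj 1 2 (by decide)))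
            (iff_of_false (by decide) (gnadj 1 3 (by decide)))
            (iff_of_false (by decide) (gnadj 1 4 (by decide)))
            (iff_of_false (by decide) (gnadj 1 5 (by decide)))
            (iff_of_false (by decide) (gnadj 1 6 (by decide)))
            (iff_of_true (by decide) (gadj 2 3 (by decide)))
            (iff_of_false (by decide) (gnadj 2 4 (by decide)))
            (iff_of_false (by decide) (gnadj 2 5 (by decide)))
            (iff_of_false (by decide) (gnadj 2 6 (by decide)))
            (iff_of_true (by decide) (gadj 3 4 (by decide)))
            (iff_of_false (by decide) (gnadj 3 5 (by decide)))
            (iff_of_false (by decide) (gnadj 3 6 (by decide)))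
            (iff_of_true (by decide) (gadj 4 5 (by decide)))
            (iff_of_false (by decide) (gnadj 4 6 (by decide)))
            (iff_of_true (by decide) (gadj 5 6 (by decide)))
        have hc3 : c ≠ v 3 := fun e => dj12 hD (by rw [e]; exact d2v3)
        have hc5 : c ≠ v 5 := fun e => dj13 hD (by rw [e]; exact d3v5)
        have hadj01 : G.Adj c (v 0) ∨ G.Adj c (v 1) := by
          rcases B9 c hD with e | e | e | e
          · exact absurd e e0
          · exact absurd e e1
          · exact Or.inl e
          · exact Or.inr e
        rcases B6 c (d1sub hD) e0 e1 hadj01 with h2c | h6c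
        · exact free_contra7 (SimpleGraph.pathGraph 7) hH_P7 hP7 x c (v 2) (v 3) (v 4) (v 5) (v 6)
            (iff_of_true (by decide) (h))
            (iff_of_false (by decide) (hind hx xv2))
            (iff_of_false (by decide) (nX3))
            (iff_of_false (by decide) (hind hx xv4))
            (iff_of_false (by decide) (nX5))
            (iff_of_false (by decide) (hind hx xv6))
            (iff_of_true (by decide) (h2c))
            (iff_of_false (by decide) (nA3 (d1sub hD)))
            (iff_of_false (by decide) (nA4 (d1sub hD) hc3 hc5))
            (iff_of_false (by decide) (nA5 (d1sub hD)))
            (iff_of_false (by decide) (fun hh => B3 c h2c hh))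
            (iff_of_true (by decide) (gadj 2 3 (by decide)))
            (iff_of_false (by decide) (gnadj 2 4 (by decide)))
            (iff_of_false (by decide) (gnadj 2 5 (by decide)))
            (iff_of_false (by decide) (gnadj 2 6 (by decide)))
            (iff_of_true (by decide) (gadj 3 4 (by decide)))
            (iff_of_false (by decide) (gnadj 3 5 (by decide)))
            (iff_of_false (by decide) (gnadj 3 6 (by decide)))
            (iff_of_true (by decide) (gadj 4 5 (by decide)))
            (iff_of_false (by decide) (gnadj 4 6 (by decide)))
            (iff_of_true (by decide) (gadj 5 6 (by decide)))
        · exact free_contra7 (SimpleGraph.pathGraph 7) hH_P7 hP7 x c (v 6) (v 5) (v 4) (v 3) (v 2)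
            (iff_of_true (by decide) (h))
            (iff_of_false (by decide) (hind hx xv6))
            (iff_of_false (by decide) (nX5))
            (iff_of_false (by decide) (hind hx xv4))
            (iff_of_false (by decide) (nX3))
            (iff_of_false (by decide) (hind hx xv2))
            (iff_of_true (by decide) (h6c))
            (iff_of_false (by decide) (nA5 (d1sub hD)))
            (iff_of_false (by decide) (nA4 (d1sub hD) hc3 hc5))
            (iff_of_false (by decide) (nA3 (d1sub hD)))
            (iff_of_false (by decide) (fun hh => B3 c hh h6c))
            (iff_of_true (by decide) (gadj 6 5 (by decide)))
            (iff_of_false (by decide) (gnadj 6 4 (by decide)))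
            (iff_of_false (by decide) (gnadj 6 3 (by decide)))
            (iff_of_false (by decide) (gnadj 6 2 (by decide)))
            (iff_of_true (by decide) (gadj 5 4 (by decide)))
            (iff_of_false (by decide) (gnadj 5 3 (by decide)))
            (iff_of_false (by decide) (gnadj 5 2 (by decide)))
            (iff_of_true (by decide) (gadj 4 3 (by decide)))
            (iff_of_false (by decide) (gnadj 4 2 (by decide)))
            (iff_of_true (by decide) (gadj 3 2 (by decide)))
      · exact nX3 (by rw [← hD2s c hD]; exact h)
      · exact nX5 (by rw [← hD3s c hD]; exact h)
    have hx0 : x ≠ v 0 := fun e => hx (by rw [e]; exact mv0)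
    obtain ⟨p⟩ := hconn.preconnected x (v 0)
    cases p with
    | nil => exact hx0 rfl
    | cons h q => exact noNbr _ h
  -- find an extra vertex u in D1
  have hnsub : ¬(C ⊆ {v 0, v 1, v 3, v 5}) := by
    intro hsub
    have hle := Set.ncard_le_ncard hsub (Set.toFinite _)
    have c1 : ({v 0, v 1, v 3, v 5} : Set V).ncard ≤ ({v 1, v 3, v 5} : Set V).ncard + 1 :=
      Set.ncard_insert_le _ _
    have c2 : ({v 1, v 3, v 5} : Set V).ncard ≤ ({v 3, v 5} : Set V).ncard + 1 :=
      Set.ncard_insert_le _ _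
    have c3 : ({v 3, v 5} : Set V).ncard ≤ ({v 5} : Set V).ncard + 1 :=
      Set.ncard_insert_le _ _
    have c4 : ({v 5} : Set V).ncard = 1 := Set.ncard_singleton _
    omega
  obtain ⟨u, huC, huS⟩ := Set.not_subset.mp hnsub
  simp only [Set.mem_insert_iff, Set.mem_singleton_iff, not_or] at huS
  obtain ⟨hu0, hu1, hu3, hu5⟩ := huS
  have huD1 : u ∈ D1 := by
    rcases htri u huC with h | h | h
    · exact h
    · exact absurd (hD2s u h) hu3
    · exact absurd (hD3s u h) hu5
  have hadj01 : G.Adj u (v 0) ∨ G.Adj u (v 1) := by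
    rcases B9 u huD1 with e | e | e | e
    · exact absurd e hu0
    · exact absurd e hu1
    · exact Or.inl e
    · exact Or.inr e
  have d1adj : ∀ z, z ∈ D1 → z ≠ u → ∀ (hCc2 : ∀ {y}, y ∈ C → y ≠ u → y ∈ (insert (v 2) (insert (v 4) (C \ {u})))), True := fun _ _ _ _ => trivial
  rcases B6 u huC hu0 hu1 hadj01 with hu2 | hu6
  · -- u ~ v2 : Cc = (C \ {u}) ∪ {v 2, v 4}
    have hm2 : v 2 ∈ insert (v 2) (insert (v 4) (C \ {u})) := Set.mem_insert _ _
    have hm4 : v 4 ∈ insert (v 2) (insert (v 4) (C \ {u})) :=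
      Set.mem_insert_of_mem _ (Set.mem_insert _ _)
    have hmC : ∀ {z}, z ∈ C → z ≠ u → z ∈ insert (v 2) (insert (v 4) (C \ {u})) :=
      fun hz hne => Set.mem_insert_of_mem _ (Set.mem_insert_of_mem _ ⟨hz, hne⟩)
    have hm0 : v 0 ∈ insert (v 2) (insert (v 4) (C \ {u})) := hmC mv0 (fun e => hu0 e.symm)
    have hm1 : v 1 ∈ insert (v 2) (insert (v 4) (C \ {u})) := hmC mv1 (fun e => hu1 e.symm)
    have hm3 : v 3 ∈ insert (v 2) (insert (v 4) (C \ {u})) := hmC mv3 (fun e => hu3 e.symm)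
    have hm5 : v 5 ∈ insert (v 2) (insert (v 4) (C \ {u})) := hmC mv5 (fun e => hu5 e.symm)
    have edge : ∀ (a b : V) (ha : a ∈ insert (v 2) (insert (v 4) (C \ {u})))
        (hb : b ∈ insert (v 2) (insert (v 4) (C \ {u}))), G.Adj a b →
        (G.induce (insert (v 2) (insert (v 4) (C \ {u})))).Adj ⟨a, ha⟩ ⟨b, hb⟩ := by
      intro a b ha hb h
      simp only [SimpleGraph.comap_adj, Function.Embedding.coe_subtype]
      exact h
    have covu : ∀ b, G.Adj u b → b ∈ insert (v 2) (insert (v 4) (C \ {u})) := by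
      intro b h
      by_cases hbC : b ∈ C
      · exact hmC hbC (fun e => G.irrefl (e ▸ h))
      · rcases B11 b with hb' | e | e | e
        · exact absurd hb' hbC
        · rw [e]; exact hm2
        · exfalso
          rw [e] at h
          rcases Nv4 u h.symm with e2 | e2
          · exact hu3 e2
          · exact hu5 e2
        · exfalso
          rw [e] at h
          exact B3 u hu2 h
    refine ⟨insert (v 2) (insert (v 4) (C \ {u})), ⟨?_, ?_⟩, ?_⟩
    · intro a b h
      rcases hC h with ha | hb
      · by_cases hua : a = u
        · subst hua
          exact Or.inr (covu b h)
        · exact Or.inl (hmC ha hua)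
      · by_cases hub : b = u
        · subst hub
          exact Or.inl (covu a h.symm)
        · exact Or.inr (hmC hb hub)
    · rw [SimpleGraph.connected_iff]
      have hub : ∀ z : ↥(insert (v 2) (insert (v 4) (C \ {u}))),
          (G.induce (insert (v 2) (insert (v 4) (C \ {u})))).Reachable z ⟨v 1, hm1⟩ := by
        rintro ⟨z, hz⟩
        rcases hz with rfl | hz
        · exact (edge _ _ hm2 hm1 (gadj 2 1 (by decide))).reachable
        rcases hz with rfl | hz
        · exact ((edge _ _ hm4 hm3 (gadj 4 3 (by decide))).reachable).trans
            (((edge _ _ hm3 hm2 (gadj 3 2 (by decide))).reachable).trans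
              ((edge _ _ hm2 hm1 (gadj 2 1 (by decide))).reachable))
        obtain ⟨hzC, hzneu0⟩ := hz
        have hzneu : z ≠ u := fun e => hzneu0 (by rw [e]; exact Set.mem_singleton _)
        rcases htri z hzC with h | h | h
        · rcases B9 z h with e | e | e | e
          · subst e
            exact (edge _ _ hm0 hm1 (gadj 0 1 (by decide))).reachable
          · subst e
            exact Reachable.refl _
          · exact ((edge _ _ (hmC hzC hzneu) hm0 e).reachable).trans
              ((edge _ _ hm0 hm1 (gadj 0 1 (by decide))).reachable)
          · exact (edge _ _ (hmC hzC hzneu) hm1 e).reachable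
        · have e3 := hD2s z h
          subst e3
          exact ((edge _ _ hm3 hm2 (gadj 3 2 (by decide))).reachable).trans
            ((edge _ _ hm2 hm1 (gadj 2 1 (by decide))).reachable)
        · have e5 := hD3s z h
          subst e5
          exact ((edge _ _ hm5 hm4 (gadj 5 4 (by decide))).reachable).trans
            (((edge _ _ hm4 hm3 (gadj 4 3 (by decide))).reachable).trans
              (((edge _ _ hm3 hm2 (gadj 3 2 (by decide))).reachable).trans
                ((edge _ _ hm2 hm1 (gadj 2 1 (by decide))).reachable)))
      exact ⟨fun x y => (hub x).trans (hub y).symm, ⟨⟨v 1, hm1⟩⟩⟩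
    · have h1 : (C \ {u}).ncard = C.ncard - 1 := Set.ncard_diff_singleton_of_mem huC
      have h2 : v 4 ∉ C \ {u} := fun h => xv4 h.1
      have h3' : v 2 ∉ insert (v 4) (C \ {u}) := by
        simp only [Set.mem_insert_iff]
        rintro (h | h)
        · exact vne 2 4 (by decide) h
        · exact xv2 h.1
      rw [Set.ncard_insert_of_notMem h3' (Set.toFinite _),
        Set.ncard_insert_of_notMem h2 (Set.toFinite _), h1]
      omega
  · -- u ~ v6 : Cc = (C \ {u}) ∪ {v 4, v 6}
    have hm4 : v 4 ∈ insert (v 4) (insert (v 6) (C \ {u})) := Set.mem_insert _ _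
    have hm6 : v 6 ∈ insert (v 4) (insert (v 6) (C \ {u})) :=
      Set.mem_insert_of_mem _ (Set.mem_insert _ _)
    have hmC : ∀ {z}, z ∈ C → z ≠ u → z ∈ insert (v 4) (insert (v 6) (C \ {u})) :=
      fun hz hne => Set.mem_insert_of_mem _ (Set.mem_insert_of_mem _ ⟨hz, hne⟩)
    have hm0 : v 0 ∈ insert (v 4) (insert (v 6) (C \ {u})) := hmC mv0 (fun e => hu0 e.symm)
    have hm1 : v 1 ∈ insert (v 4) (insert (v 6) (C \ {u})) := hmC mv1 (fun e => hu1 e.symm)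
    have hm3 : v 3 ∈ insert (v 4) (insert (v 6) (C \ {u})) := hmC mv3 (fun e => hu3 e.symm)
    have hm5 : v 5 ∈ insert (v 4) (insert (v 6) (C \ {u})) := hmC mv5 (fun e => hu5 e.symm)
    have edge : ∀ (a b : V) (ha : a ∈ insert (v 4) (insert (v 6) (C \ {u})))
        (hb : b ∈ insert (v 4) (insert (v 6) (C \ {u}))), G.Adj a b →
        (G.induce (insert (v 4) (insert (v 6) (C \ {u})))).Adj ⟨a, ha⟩ ⟨b, hb⟩ := by
      intro a b ha hb h
      simp only [SimpleGraph.comap_adj, Function.Embedding.coe_subtype]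
      exact h
    have covu : ∀ b, G.Adj u b → b ∈ insert (v 4) (insert (v 6) (C \ {u})) := by
      intro b h
      by_cases hbC : b ∈ C
      · exact hmC hbC (fun e => G.irrefl (e ▸ h))
      · rcases B11 b with hb' | e | e | e
        · exact absurd hb' hbC
        · exfalso
          rw [e] at h
          exact B3 u h hu6
        · exfalso
          rw [e] at h
          rcases Nv4 u h.symm with e2 | e2
          · exact hu3 e2
          · exact hu5 e2
        · rw [e]; exact hm6
    refine ⟨insert (v 4) (insert (v 6) (C \ {u})), ⟨?_, ?_⟩, ?_⟩
    · intro a b h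
      rcases hC h with ha | hb
      · by_cases hua : a = u
        · subst hua
          exact Or.inr (covu b h)
        · exact Or.inl (hmC ha hua)
      · by_cases hub : b = u
        · subst hub
          exact Or.inl (covu a h.symm)
        · exact Or.inr (hmC hb hub)
    · rw [SimpleGraph.connected_iff]
      have hub : ∀ z : ↥(insert (v 4) (insert (v 6) (C \ {u}))),
          (G.induce (insert (v 4) (insert (v 6) (C \ {u})))).Reachable z ⟨v 0, hm0⟩ := by
        rintro ⟨z, hz⟩
        rcases hz with rfl | hz
        · exact ((edge _ _ hm4 hm5 (gadj 4 5 (by decide))).reachable).trans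
            (((edge _ _ hm5 hm6 (gadj 5 6 (by decide))).reachable).trans
              ((edge _ _ hm6 hm0 (gadj 6 0 (by decide))).reachable))
        rcases hz with rfl | hz
        · exact (edge _ _ hm6 hm0 (gadj 6 0 (by decide))).reachable
        obtain ⟨hzC, hzneu0⟩ := hz
        have hzneu : z ≠ u := fun e => hzneu0 (by rw [e]; exact Set.mem_singleton _)
        rcases htri z hzC with h | h | h
        · rcases B9 z h with e | e | e | e
          · subst e
            exact Reachable.refl _
          · subst e
            exact (edge _ _ hm1 hm0 (gadj 1 0 (by decide))).reachable
          · exact (edge _ _ (hmC hzC hzneu) hm0 e).reachable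
          · exact ((edge _ _ (hmC hzC hzneu) hm1 e).reachable).trans
              ((edge _ _ hm1 hm0 (gadj 1 0 (by decide))).reachable)
        · have e3 := hD2s z h
          subst e3
          exact ((edge _ _ hm3 hm4 (gadj 3 4 (by decide))).reachable).trans
            (((edge _ _ hm4 hm5 (gadj 4 5 (by decide))).reachable).trans
              (((edge _ _ hm5 hm6 (gadj 5 6 (by decide))).reachable).trans
                ((edge _ _ hm6 hm0 (gadj 6 0 (by decide))).reachable)))
        · have e5 := hD3s z h
          subst e5
          exact ((edge _ _ hm5 hm6 (gadj 5 6 (by decide))).reachable).trans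
            ((edge _ _ hm6 hm0 (gadj 6 0 (by decide))).reachable)
      exact ⟨fun x y => (hub x).trans (hub y).symm, ⟨⟨v 0, hm0⟩⟩⟩
    · have h1 : (C \ {u}).ncard = C.ncard - 1 := Set.ncard_diff_singleton_of_mem huC
      have h2 : v 6 ∉ C \ {u} := fun h => xv6 h.1
      have h3' : v 4 ∉ insert (v 6) (C \ {u}) := by
        simp only [Set.mem_insert_iff]
        rintro (h | h)
        · exact vne 4 6 (by decide) h
        · exact xv4 h.1
      rw [Set.ncard_insert_of_notMem h3' (Set.toFinite _),
        Set.ncard_insert_of_notMem h2 (Set.toFinite _), h1]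
      omega
end

section
/- Let G be a finite connected simple graph with at least one edge that is critical. Then for every minimum vertex cover C of G, there is no bridge of G both of whose endvertices lie in C. -/
open SimpleGraph

/-- `G` is critical: every connected proper induced subgraph of `G` with at least one
edge has strictly smaller price of connectivity `τ_c/τ`. -/
def IsCritical {V : Type} (G : SimpleGraph V) : Prop :=
  ∀ S : Set V, S ≠ Set.univ → (G.induce S).Connected → (G.induce S).edgeSet.Nonempty →
    (tauc (G.induce S) : ℚ) / (tau (G.induce S) : ℚ) < (tauc G : ℚ) / (tau G : ℚ)

lemma tau_le {V : Type} {G : SimpleGraph V} {C : Set V} (h : _root_.IsVertexCover G C) :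
    tau G ≤ C.ncard := Nat.sInf_le ⟨C, h, rfl⟩

lemma tauc_le {V : Type} {G : SimpleGraph V} {C : Set V} (h : IsConnectedVertexCover G C) :
    tauc G ≤ C.ncard := Nat.sInf_le ⟨C, h, rfl⟩

lemma exists_min_cover {V : Type} (G : SimpleGraph V) :
    ∃ C : Set V, _root_.IsVertexCover G C ∧ C.ncard = tau G := by
  have h : ({n | ∃ C : Set V, _root_.IsVertexCover G C ∧ C.ncard = n}).Nonempty :=
    ⟨(Set.univ : Set V).ncard, Set.univ, fun u v _ => Or.inl trivial, rfl⟩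
  exact Nat.sInf_mem h

lemma exists_min_ccover {V : Type} (G : SimpleGraph V) (h : G.Connected) :
    ∃ C : Set V, IsConnectedVertexCover G C ∧ C.ncard = tauc G := by
  have hc : (G.induce (Set.univ : Set V)).Connected :=
    Connected.map (G.induceUnivIso).symm.toHom (G.induceUnivIso).symm.toEquiv.surjective h
  have hne : ({n | ∃ C : Set V, IsConnectedVertexCover G C ∧ C.ncard = n}).Nonempty :=
    ⟨(Set.univ : Set V).ncard, Set.univ, ⟨fun u v _ => Or.inl trivial, hc⟩, rfl⟩
  exact Nat.sInf_mem hne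

lemma tau_pos {V : Type} [Fintype V] {G : SimpleGraph V} (he : G.edgeSet.Nonempty) :
    0 < tau G := by
  obtain ⟨C, hC, hCc⟩ := exists_min_cover G
  rw [← hCc]
  rcases he with ⟨e, hee⟩
  induction e with
  | h a b =>
    rw [SimpleGraph.mem_edgeSet] at hee
    rcases hC hee with h | h
    · exact (Set.ncard_pos C.toFinite).mpr ⟨a, h⟩
    · exact (Set.ncard_pos C.toFinite).mpr ⟨b, h⟩

/-- If `G` is a finite connected graph with at least one edge that is critical, then
for every minimum vertex cover `C` of `G` there is no bridge of `G` with both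
endvertices in `C`. -/
theorem critical_no_bridge_in_cover {V : Type} [Fintype V] (G : SimpleGraph V)
    (hconn : G.Connected) (hedge : G.edgeSet.Nonempty) (hcrit : IsCritical G) :
    ∀ C : Set V, _root_.IsVertexCover G C → C.ncard = tau G →
      ∀ u ∈ C, ∀ v ∈ C, ¬ G.IsBridge s(u, v) := by
  intro C hC hCmin u hu v hv hbr
  have hnr : ¬ (G.deleteEdges {s(u, v)}).Reachable u v := (SimpleGraph.isBridge_iff).mp hbr
  have hadj : G.Adj u v := by
    by_contra hna
    apply hnr
    refine (hconn u v).mono ?_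
    intro x y hxy
    simp only [SimpleGraph.deleteEdges_adj, Set.mem_singleton_iff]
    refine ⟨hxy, fun he => hna ?_⟩
    rcases Sym2.eq_iff.mp he with ⟨rfl, rfl⟩ | ⟨rfl, rfl⟩
    · exact hxy
    · exact hxy.symm
  set H : SimpleGraph V := G \ SimpleGraph.fromEdgeSet {s(u, v)} with hH
  have hne : u ≠ v := hadj.ne
  have hHadj : ∀ x y : V, H.Adj x y ↔ G.Adj x y ∧ s(x, y) ≠ s(u, v) := by
    intro x y
    rw [hH, SimpleGraph.sdiff_adj, SimpleGraph.fromEdgeSet_adj]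
    constructor
    · rintro ⟨h1, h2⟩
      refine ⟨h1, fun he => h2 ⟨Set.mem_singleton_iff.mpr he, h1.ne⟩⟩
    · rintro ⟨h1, h2⟩
      exact ⟨h1, fun h => h2 (Set.mem_singleton_iff.mp h.1)⟩
  set A : Set V := {x | H.Reachable u x} with hA
  set B : Set V := {x | H.Reachable v x} with hB
  have huA : u ∈ A := SimpleGraph.Reachable.refl u
  have hvB : v ∈ B := SimpleGraph.Reachable.refl v
  have hABdisj : ∀ x, x ∈ A → x ∈ B → False := fun x hx hx' => hnr (hx.trans hx'.symm)
  have hAstep : ∀ x y, x ∈ A → H.Adj x y → y ∈ A := fun x y hx h => hx.trans h.reachable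
  have hBstep : ∀ x y, x ∈ B → H.Adj x y → y ∈ B := fun x y hx h => hx.trans h.reachable
  -- every vertex is in A or B
  have hdich : ∀ x, x ∈ A ∨ x ∈ B := by
    have hstep : ∀ y z, G.Adj y z → (y ∈ A ∨ y ∈ B) → (z ∈ A ∨ z ∈ B) := by
      intro y z hyz hy
      by_cases hs : s(y, z) = s(u, v)
      · rcases Sym2.eq_iff.mp hs with ⟨rfl, rfl⟩ | ⟨rfl, rfl⟩
        · exact Or.inr hvB
        · exact Or.inl huA
      · have hH' : H.Adj y z := (hHadj y z).mpr ⟨hyz, hs⟩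
        rcases hy with hy | hy
        · exact Or.inl (hAstep _ _ hy hH')
        · exact Or.inr (hBstep _ _ hy hH')
    have hwalk : ∀ {y z : V} (p : G.Walk y z), (y ∈ A ∨ y ∈ B) → (z ∈ A ∨ z ∈ B) := by
      intro y z p
      induction p with
      | nil => exact id
      | cons h q ih => exact fun hy => ih (hstep _ _ h hy)
    intro x
    exact (hconn u x).elim fun p => hwalk p (Or.inl huA)
  have hvnA : v ∉ A := fun h => hnr h
  have hunB : u ∉ B := fun h => hnr h.symm
  have hunb : ∀ x, G.Adj u x → x ≠ v → x ∈ A := by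
    intro x hx hxv
    refine hAstep u x huA ((hHadj u x).mpr ⟨hx, fun hs => ?_⟩)
    rcases Sym2.eq_iff.mp hs with ⟨h1, h2⟩ | ⟨h1, h2⟩
    · exact hxv h2
    · exact hne h1
  have hvnb : ∀ x, G.Adj v x → x ≠ u → x ∈ B := by
    intro x hx hxu
    refine hBstep v x hvB ((hHadj v x).mpr ⟨hx, fun hs => ?_⟩)
    rcases Sym2.eq_iff.mp hs with ⟨h1, h2⟩ | ⟨h1, h2⟩
    · exact hne h1.symm
    · exact hxu h2
  -- u has a neighbor in A, v has a neighbor in B (by minimality of C)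
  have ha : ∃ a, G.Adj u a ∧ a ∈ A := by
    by_contra hno
    push_neg at hno
    have hcov : _root_.IsVertexCover G (C \ {u}) := by
      intro x y hxy
      rcases eq_or_ne x u with rfl | hxu
      · have hyv : y = v := by
          by_contra hyv
          exact hno y hxy (hunb y hxy hyv)
        exact Or.inr ⟨hyv ▸ hv, by simp [hyv, hne.symm]⟩
      · rcases eq_or_ne y u with rfl | hyu
        · have hxv : x = v := by
            by_contra hxv
            exact hno x hxy.symm (hunb x hxy.symm hxv)
          exact Or.inl ⟨hxv ▸ hv, by simp [hxv, hne.symm]⟩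
        · rcases hC hxy with h | h
          · exact Or.inl ⟨h, by simp [hxu]⟩
          · exact Or.inr ⟨h, by simp [hyu]⟩
    have := tau_le hcov
    have hlt : (C \ {u}).ncard < C.ncard := Set.ncard_diff_singleton_lt_of_mem hu C.toFinite
    omega
  have hb : ∃ b, G.Adj v b ∧ b ∈ B := by
    by_contra hno
    push_neg at hno
    have hcov : _root_.IsVertexCover G (C \ {v}) := by
      intro x y hxy
      rcases eq_or_ne x v with rfl | hxv
      · have hyu : y = u := by
          by_contra hyu
          exact hno y hxy (hvnb y hxy hyu)
        exact Or.inr ⟨hyu ▸ hu, by simp [hyu, hne]⟩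
      · rcases eq_or_ne y v with rfl | hyv
        · have hxu : x = u := by
            by_contra hxu
            exact hno x hxy.symm (hvnb x hxy.symm hxu)
          exact Or.inl ⟨hxu ▸ hu, by simp [hxu, hne]⟩
        · rcases hC hxy with h | h
          · exact Or.inl ⟨h, by simp [hxv]⟩
          · exact Or.inr ⟨h, by simp [hyv]⟩
    have := tau_le hcov
    have hlt : (C \ {v}).ncard < C.ncard := Set.ncard_diff_singleton_lt_of_mem hv C.toFinite
    omega
  obtain ⟨a, hua, haA⟩ := ha
  obtain ⟨b, hvb, hbB⟩ := hb
  set SA : Set V := A ∪ {v} with hSA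
  set SB : Set V := B ∪ {u} with hSB
  have huSA : u ∈ SA := Or.inl huA
  have hvSA : v ∈ SA := Or.inr rfl
  have hvSB : v ∈ SB := Or.inl hvB
  have huSB : u ∈ SB := Or.inr rfl
  have hSAne : SA ≠ Set.univ := by
    intro h
    have hb' : b ∈ SA := h ▸ Set.mem_univ b
    rcases hb' with h' | h'
    · exact hABdisj b h' hbB
    · exact hvb.ne (Set.mem_singleton_iff.mp h').symm
  have hSBne : SB ≠ Set.univ := by
    intro h
    have ha' : a ∈ SB := h ▸ Set.mem_univ a
    rcases ha' with h' | h'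
    · exact hABdisj a haA h'
    · exact hua.ne (Set.mem_singleton_iff.mp h').symm
  -- connectivity of the two sides
  have hreachA : ∀ {x : V} (hx : x ∈ A), (G.induce SA).Reachable ⟨u, huSA⟩ ⟨x, Or.inl hx⟩ := by
    have key : ∀ {y z : V} (p : H.Walk y z) (hy : y ∈ A) (hz : z ∈ A),
        (G.induce SA).Reachable ⟨y, Or.inl hy⟩ ⟨z, Or.inl hz⟩ := by
      intro y z p
      induction p with
      | nil => intro hy hz; rfl
      | @cons y w z h q ih =>
        intro hy hz
        have hwA : w ∈ A := hAstep _ _ hy h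
        have hstep : (G.induce SA).Adj ⟨y, Or.inl hy⟩ ⟨w, Or.inl hwA⟩ :=
          ((hHadj y w).mp h).1
        exact hstep.reachable.trans (ih hwA hz)
    intro x hx
    exact (show H.Reachable u x from hx).elim fun p => key p huA hx
  have hreachB : ∀ {x : V} (hx : x ∈ B), (G.induce SB).Reachable ⟨v, hvSB⟩ ⟨x, Or.inl hx⟩ := by
    have key : ∀ {y z : V} (p : H.Walk y z) (hy : y ∈ B) (hz : z ∈ B),
        (G.induce SB).Reachable ⟨y, Or.inl hy⟩ ⟨z, Or.inl hz⟩ := by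
      intro y z p
      induction p with
      | nil => intro hy hz; rfl
      | @cons y w z h q ih =>
        intro hy hz
        have hwB : w ∈ B := hBstep _ _ hy h
        have hstep : (G.induce SB).Adj ⟨y, Or.inl hy⟩ ⟨w, Or.inl hwB⟩ :=
          ((hHadj y w).mp h).1
        exact hstep.reachable.trans (ih hwB hz)
    intro x hx
    exact (show H.Reachable v x from hx).elim fun p => key p hvB hx
  have htoA : ∀ z : SA, (G.induce SA).Reachable z ⟨u, huSA⟩ := by
    rintro ⟨x, hx | hx⟩
    · exact (hreachA hx).symm
    · have hxv : x = v := hx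
      have hstep : (G.induce SA).Adj ⟨x, Or.inr hx⟩ ⟨u, huSA⟩ := by
        show G.Adj x u
        rw [hxv]; exact hadj.symm
      exact hstep.reachable
  have htoB : ∀ z : SB, (G.induce SB).Reachable z ⟨v, hvSB⟩ := by
    rintro ⟨x, hx | hx⟩
    · exact (hreachB hx).symm
    · have hxu : x = u := hx
      have hstep : (G.induce SB).Adj ⟨x, Or.inr hx⟩ ⟨v, hvSB⟩ := by
        show G.Adj x v
        rw [hxu]; exact hadj
      exact hstep.reachable
  have hconnSA : (G.induce SA).Connected := by
    rw [SimpleGraph.connected_iff]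
    exact ⟨fun ax bx => (htoA ax).trans (htoA bx).symm, ⟨⟨u, huSA⟩⟩⟩
  have hconnSB : (G.induce SB).Connected := by
    rw [SimpleGraph.connected_iff]
    exact ⟨fun ax bx => (htoB ax).trans (htoB bx).symm, ⟨⟨v, hvSB⟩⟩⟩
  -- edge characterizations
  have hSAadj : ∀ (x y : SA), (G.induce SA).Adj x y →
      ((x : V) ∈ A ∧ (y : V) ∈ A) ∨ s((x : V), (y : V)) = s(u, v) := by
    rintro ⟨x, hx⟩ ⟨y, hy⟩ hxy
    have hxy' : G.Adj x y := hxy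
    rcases hx with hx | hx
    · rcases hy with hy | hy
      · exact Or.inl ⟨hx, hy⟩
      · have hyv : y = v := hy
        subst hyv
        have hxu : x = u := by
          by_contra hxu
          exact hABdisj x hx (hvnb x hxy'.symm hxu)
        exact Or.inr (by subst hxu; rfl)
    · have hxv : x = v := hx
      subst hxv
      rcases hy with hy | hy
      · have hyu : y = u := by
          by_contra hyu
          exact hABdisj y hy (hvnb y hxy' hyu)
        exact Or.inr (by subst hyu; exact Sym2.eq_swap)
      · exact absurd ((Set.mem_singleton_iff.mp hy).symm) hxy'.ne
  have hSBadj : ∀ (x y : SB), (G.induce SB).Adj x y →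
      ((x : V) ∈ B ∧ (y : V) ∈ B) ∨ s((x : V), (y : V)) = s(u, v) := by
    rintro ⟨x, hx⟩ ⟨y, hy⟩ hxy
    have hxy' : G.Adj x y := hxy
    rcases hx with hx | hx
    · rcases hy with hy | hy
      · exact Or.inl ⟨hx, hy⟩
      · have hyu : y = u := hy
        subst hyu
        have hxv : x = v := by
          by_contra hxv
          exact hABdisj x (hunb x hxy'.symm hxv) hx
        exact Or.inr (by subst hxv; exact Sym2.eq_swap)
    · have hxu : x = u := hx
      subst hxu
      rcases hy with hy | hy
      · have hyv : y = v := by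
          by_contra hyv
          exact hABdisj y (hunb y hxy' hyv) hy
        exact Or.inr (by subst hyv; rfl)
      · exact absurd ((Set.mem_singleton_iff.mp hy).symm) hxy'.ne
  -- tau bounds
  have htauA : tau (G.induce SA) ≤ (C ∩ A).ncard := by
    have hcov : _root_.IsVertexCover (G.induce SA) (Subtype.val ⁻¹' (C ∩ A)) := by
      intro x y hxy
      rcases hSAadj x y hxy with ⟨hxA, hyA⟩ | hs
      · have hxy' : G.Adj (x : V) (y : V) := hxy
        rcases hC hxy' with h | h
        · exact Or.inl ⟨h, hxA⟩
        · exact Or.inr ⟨h, hyA⟩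
      · rcases Sym2.eq_iff.mp hs with ⟨h1, h2⟩ | ⟨h1, h2⟩
        · exact Or.inl (by rw [Set.mem_preimage, h1]; exact ⟨hu, huA⟩)
        · exact Or.inr (by rw [Set.mem_preimage, h2]; exact ⟨hu, huA⟩)
    have hcard : (Subtype.val ⁻¹' (C ∩ A) : Set SA).ncard = (C ∩ A).ncard :=
      Set.ncard_preimage_of_injective_subset_range Subtype.val_injective
        (by rw [Subtype.range_val]; exact fun x hx => Or.inl hx.2)
    exact hcard ▸ tau_le hcov
  have htauB : tau (G.induce SB) ≤ (C ∩ B).ncard := by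
    have hcov : _root_.IsVertexCover (G.induce SB) (Subtype.val ⁻¹' (C ∩ B)) := by
      intro x y hxy
      rcases hSBadj x y hxy with ⟨hxB, hyB⟩ | hs
      · have hxy' : G.Adj (x : V) (y : V) := hxy
        rcases hC hxy' with h | h
        · exact Or.inl ⟨h, hxB⟩
        · exact Or.inr ⟨h, hyB⟩
      · rcases Sym2.eq_iff.mp hs with ⟨h1, h2⟩ | ⟨h1, h2⟩
        · exact Or.inr (by rw [Set.mem_preimage, h2]; exact ⟨hv, hvB⟩)
        · exact Or.inl (by rw [Set.mem_preimage, h1]; exact ⟨hv, hvB⟩)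
    have hcard : (Subtype.val ⁻¹' (C ∩ B) : Set SB).ncard = (C ∩ B).ncard :=
      Set.ncard_preimage_of_injective_subset_range Subtype.val_injective
        (by rw [Subtype.range_val]; exact fun x hx => Or.inl hx.2)
    exact hcard ▸ tau_le hcov
  have hsum : (C ∩ A).ncard + (C ∩ B).ncard ≤ C.ncard := by
    have hdisj : Disjoint (C ∩ A) (C ∩ B) :=
      Set.disjoint_left.mpr fun x hx hx' => (hABdisj x hx.2 hx'.2).elim
    calc (C ∩ A).ncard + (C ∩ B).ncard
        = ((C ∩ A) ∪ (C ∩ B)).ncard :=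
          (Set.ncard_union_eq hdisj (C ∩ A).toFinite (C ∩ B).toFinite).symm
      _ ≤ C.ncard := Set.ncard_le_ncard
          (Set.union_subset Set.inter_subset_left Set.inter_subset_left) C.toFinite
  -- edge sets nonempty
  have hedgeSA : (G.induce SA).edgeSet.Nonempty :=
    ⟨s(⟨u, huSA⟩, ⟨v, hvSA⟩), show (G.induce SA).Adj ⟨u, huSA⟩ ⟨v, hvSA⟩ from hadj⟩
  have hedgeSB : (G.induce SB).edgeSet.Nonempty :=
    ⟨s(⟨u, huSB⟩, ⟨v, hvSB⟩), show (G.induce SB).Adj ⟨u, huSB⟩ ⟨v, hvSB⟩ from hadj⟩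
  -- minimum connected covers of the two sides
  obtain ⟨DA, ⟨hDAcov, hDAconn⟩, hDAcard⟩ := exists_min_ccover (G.induce SA) hconnSA
  obtain ⟨DB, ⟨hDBcov, hDBconn⟩, hDBcard⟩ := exists_min_ccover (G.induce SB) hconnSB
  have hexadj : ∀ {W : Type} (Gw : SimpleGraph W) (x y : W),
      Gw.Reachable x y → x ≠ y → ∃ z, Gw.Adj x z := by
    rintro W Gw x y ⟨p⟩ hxy
    cases p with
    | nil => exact absurd rfl hxy
    | cons h q => exact ⟨_, h⟩
  have huDA : (⟨u, huSA⟩ : SA) ∈ DA := by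
    by_contra huDA
    have hvDA : (⟨v, hvSA⟩ : SA) ∈ DA := by
      rcases hDAcov (show (G.induce SA).Adj ⟨u, huSA⟩ ⟨v, hvSA⟩ from hadj) with h | h
      · exact absurd h huDA
      · exact h
    have haDA : (⟨a, Or.inl haA⟩ : SA) ∈ DA := by
      rcases hDAcov (show (G.induce SA).Adj ⟨u, huSA⟩ ⟨a, Or.inl haA⟩ from hua) with h | h
      · exact absurd h huDA
      · exact h
    have hner : (⟨⟨v, hvSA⟩, hvDA⟩ : DA) ≠ ⟨⟨a, Or.inl haA⟩, haDA⟩ := by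
      intro h
      have hva : v = a := congrArg (fun z : DA => (z.1 : V)) h
      exact hvnA (hva ▸ haA)
    obtain ⟨z, hz⟩ := hexadj _ _ _
      (hDAconn.preconnected ⟨⟨v, hvSA⟩, hvDA⟩ ⟨⟨a, Or.inl haA⟩, haDA⟩) hner
    have hz' : G.Adj v ((z.1 : SA) : V) := hz
    rcases z.1.2 with hzA | hzv
    · have hzu : ((z.1 : SA) : V) ≠ u := by
        intro h
        have hval : (z.1 : SA) = ⟨u, huSA⟩ := Subtype.ext h
        exact huDA (hval ▸ z.2)
      exact hABdisj _ hzA (hvnb _ hz' hzu)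
    · exact hz'.ne (Set.mem_singleton_iff.mp hzv).symm
  have hvDB : (⟨v, hvSB⟩ : SB) ∈ DB := by
    by_contra hvDB
    have huDB : (⟨u, huSB⟩ : SB) ∈ DB := by
      rcases hDBcov (show (G.induce SB).Adj ⟨u, huSB⟩ ⟨v, hvSB⟩ from hadj) with h | h
      · exact h
      · exact absurd h hvDB
    have hbDB : (⟨b, Or.inl hbB⟩ : SB) ∈ DB := by
      rcases hDBcov (show (G.induce SB).Adj ⟨v, hvSB⟩ ⟨b, Or.inl hbB⟩ from hvb) with h | h
      · exact absurd h hvDB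
      · exact h
    have hner : (⟨⟨u, huSB⟩, huDB⟩ : DB) ≠ ⟨⟨b, Or.inl hbB⟩, hbDB⟩ := by
      intro h
      have hub : u = b := congrArg (fun z : DB => (z.1 : V)) h
      exact hunB (hub ▸ hbB)
    obtain ⟨z, hz⟩ := hexadj _ _ _
      (hDBconn.preconnected ⟨⟨u, huSB⟩, huDB⟩ ⟨⟨b, Or.inl hbB⟩, hbDB⟩) hner
    have hz' : G.Adj u ((z.1 : SB) : V) := hz
    rcases z.1.2 with hzB | hzu
    · have hzv : ((z.1 : SB) : V) ≠ v := by
        intro h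
        have hval : (z.1 : SB) = ⟨v, hvSB⟩ := Subtype.ext h
        exact hvDB (hval ▸ z.2)
      exact hABdisj _ (hunb _ hz' hzv) hzB
    · exact hz'.ne (Set.mem_singleton_iff.mp hzu).symm
  -- push covers to V and glue
  set EA : Set V := Subtype.val '' DA with hEA
  set EB : Set V := Subtype.val '' DB with hEB
  have huEA : u ∈ EA := ⟨⟨u, huSA⟩, huDA, rfl⟩
  have hvEB : v ∈ EB := ⟨⟨v, hvSB⟩, hvDB, rfl⟩
  have hGdich : ∀ x y, G.Adj x y → s(x, y) = s(u, v) ∨ (x ∈ A ∧ y ∈ A) ∨ (x ∈ B ∧ y ∈ B) := by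
    intro x y hxy
    by_cases hs : s(x, y) = s(u, v)
    · exact Or.inl hs
    · have hH' : H.Adj x y := (hHadj x y).mpr ⟨hxy, hs⟩
      rcases hdich x with hx | hx
      · exact Or.inr (Or.inl ⟨hx, hAstep _ _ hx hH'⟩)
      · exact Or.inr (Or.inr ⟨hx, hBstep _ _ hx hH'⟩)
  have hcovU : _root_.IsVertexCover G (EA ∪ EB) := by
    intro x y hxy
    rcases hGdich x y hxy with hs | ⟨hx, hy⟩ | ⟨hx, hy⟩
    · rcases Sym2.eq_iff.mp hs with ⟨h1, h2⟩ | ⟨h1, h2⟩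
      · exact Or.inl (Or.inl (h1 ▸ huEA))
      · exact Or.inr (Or.inl (h2 ▸ huEA))
    · rcases hDAcov (show (G.induce SA).Adj ⟨x, Or.inl hx⟩ ⟨y, Or.inl hy⟩ from hxy) with h | h
      · exact Or.inl (Or.inl ⟨_, h, rfl⟩)
      · exact Or.inr (Or.inl ⟨_, h, rfl⟩)
    · rcases hDBcov (show (G.induce SB).Adj ⟨x, Or.inl hx⟩ ⟨y, Or.inl hy⟩ from hxy) with h | h
      · exact Or.inl (Or.inr ⟨_, h, rfl⟩)
      · exact Or.inr (Or.inr ⟨_, h, rfl⟩)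
  have hreachEA : ∀ (x : V) (hx : x ∈ EA),
      (G.induce (EA ∪ EB)).Reachable ⟨x, Or.inl hx⟩ ⟨u, Or.inl huEA⟩ := by
    rintro x ⟨d, hd, rfl⟩
    have r := hDAconn.preconnected ⟨d, hd⟩ ⟨⟨u, huSA⟩, huDA⟩
    let f : ((G.induce SA).induce DA) →g (G.induce (EA ∪ EB)) :=
      ⟨fun z => ⟨((z.1 : SA) : V), Or.inl ⟨z.1, z.2, rfl⟩⟩, fun {z w} h => h⟩
    exact r.map f
  have hreachEB : ∀ (x : V) (hx : x ∈ EB),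
      (G.induce (EA ∪ EB)).Reachable ⟨x, Or.inr hx⟩ ⟨v, Or.inr hvEB⟩ := by
    rintro x ⟨d, hd, rfl⟩
    have r := hDBconn.preconnected ⟨d, hd⟩ ⟨⟨v, hvSB⟩, hvDB⟩
    let f : ((G.induce SB).induce DB) →g (G.induce (EA ∪ EB)) :=
      ⟨fun z => ⟨((z.1 : SB) : V), Or.inr ⟨z.1, z.2, rfl⟩⟩, fun {z w} h => h⟩
    exact r.map f
  have hconnU : (G.induce (EA ∪ EB)).Connected := by
    rw [SimpleGraph.connected_iff]
    have huvU : (G.induce (EA ∪ EB)).Adj ⟨u, Or.inl huEA⟩ ⟨v, Or.inr hvEB⟩ := hadj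
    have hto : ∀ z : ↥(EA ∪ EB), (G.induce (EA ∪ EB)).Reachable z ⟨u, Or.inl huEA⟩ := by
      rintro ⟨x, hx | hx⟩
      · exact hreachEA x hx
      · exact (hreachEB x hx).trans huvU.symm.reachable
    exact ⟨fun p q => (hto p).trans (hto q).symm, ⟨⟨u, Or.inl huEA⟩⟩⟩
  have htaucU : tauc G ≤ (EA ∪ EB).ncard := tauc_le ⟨hcovU, hconnU⟩
  have hEAcard : EA.ncard = tauc (G.induce SA) := by
    rw [hEA, Set.ncard_image_of_injective _ Subtype.val_injective, hDAcard]
  have hEBcard : EB.ncard = tauc (G.induce SB) := by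
    rw [hEB, Set.ncard_image_of_injective _ Subtype.val_injective, hDBcard]
  have htaucsum : tauc G ≤ tauc (G.induce SA) + tauc (G.induce SB) := by
    calc tauc G ≤ (EA ∪ EB).ncard := htaucU
      _ ≤ EA.ncard + EB.ncard := Set.ncard_union_le EA EB
      _ = tauc (G.induce SA) + tauc (G.induce SB) := by rw [hEAcard, hEBcard]
  -- final arithmetic
  haveI : Fintype ↥SA := Fintype.ofFinite _
  haveI : Fintype ↥SB := Fintype.ofFinite _
  have hQA := hcrit SA hSAne hconnSA hedgeSA
  have hQB := hcrit SB hSBne hconnSB hedgeSB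
  have htauApos : 0 < tau (G.induce SA) := tau_pos hedgeSA
  have htauBpos : 0 < tau (G.induce SB) := tau_pos hedgeSB
  have htauGpos : 0 < tau G := tau_pos hedge
  have hA' : tauc (G.induce SA) * tau G < tauc G * tau (G.induce SA) := by
    have h := (div_lt_div_iff₀ (by exact_mod_cast htauApos) (by exact_mod_cast htauGpos)).mp hQA
    exact_mod_cast h
  have hB' : tauc (G.induce SB) * tau G < tauc G * tau (G.induce SB) := by
    have h := (div_lt_div_iff₀ (by exact_mod_cast htauBpos) (by exact_mod_cast htauGpos)).mp hQB
    exact_mod_cast h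
  have htausum : tau (G.induce SA) + tau (G.induce SB) ≤ tau G := by omega
  have hfinal : tauc G * tau G < tauc G * tau G := by
    calc tauc G * tau G
        ≤ (tauc (G.induce SA) + tauc (G.induce SB)) * tau G :=
          Nat.mul_le_mul_right _ htaucsum
      _ = tauc (G.induce SA) * tau G + tauc (G.induce SB) * tau G := add_mul _ _ _
      _ < tauc G * tau (G.induce SA) + tauc G * tau (G.induce SB) := Nat.add_lt_add hA' hB'
      _ = tauc G * (tau (G.induce SA) + tau (G.induce SB)) := (mul_add _ _ _).symm
      _ ≤ tauc G * tau G := Nat.mul_le_mul_left _ htausum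
  exact absurd hfinal (lt_irrefl _)
end
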